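/- arXiv:2303.03690 — 4 statements merged into one kernel-verified Lean document; each statement's English description precedes it below -/
import Mathlib

section
/- (L∞ boundedness of the numerical solution, Lemma 3.3.) Let g ≥ 0, ε > 0 and suppose the maximum time step satisfies τ^α ≤ 3/(Γ(2−α)(4g² + 3ε)). If u⁰, …, u^N ∈ V_h solve the variable-step L1 scheme, then for every n ≥ 1, ‖u^n‖_∞ ≤ C̃_Ω √( 4E[u⁰] + (9/7)(1+ε+g²)² L² ), where C̃_Ω is the constant in the discrete embedding inequality ‖v‖_∞ ≤ C̃_Ω(‖v‖ + ‖(1+Δ_h)v‖). In particular the numerical solution is bounded in the maximum norm by a mesh-independent constant c₀. -/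
open scoped BigOperators

/-- ω_β(t) = t^{β-1}/Γ(β) -/
noncomputable def omegaK (β t : ℝ) : ℝ := t ^ (β - 1) / Real.Gamma β

/-- variable-step L1 kernel: `aK α t n k = a^{(n)}_{n-k}` for `1 ≤ k ≤ n`. -/
noncomputable def aK (α : ℝ) (t : ℕ → ℝ) (n k : ℕ) : ℝ :=
  (1 / (t k - t (k - 1))) * ∫ s in (t (k - 1))..(t k), omegaK (1 - α) (t n - s)

/-- DCC kernel: `pK α t n m = p^{(n)}_m`, i.e. `p^{(n)}_{n-k} = pK α t n (n-k)`;
`p^{(n)}_0 = 1/a^{(n)}_0` and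
`p^{(n)}_{n-k} = (1/a^{(k)}_0) Σ_{j=k+1}^n (a^{(j)}_{j-k-1} - a^{(j)}_{j-k}) p^{(n)}_{n-j}`. -/
noncomputable def pK (α : ℝ) (t : ℕ → ℝ) (n : ℕ) : ℕ → ℝ
  | 0 => 1 / aK α t n n
  | m + 1 =>
      (1 / aK α t (n - m - 1) (n - m - 1)) *
        ∑ i ∈ (Finset.range (m + 1)).attach,
          (aK α t (n - i.1) (n - m) - aK α t (n - i.1) (n - m - 1)) * pK α t n i.1
  decreasing_by exact Finset.mem_range.mp i.2

/-- discrete Laplacian on `L`-periodic grid functions (indices mod `M`) -/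
noncomputable def dLap (M : ℕ) (h : ℝ) (v : ZMod M → ZMod M → ℝ) : ZMod M → ZMod M → ℝ :=
  fun i j => (v (i + 1) j + v (i - 1) j + v i (j + 1) + v i (j - 1) - 4 * v i j) / h ^ 2

/-- discrete inner product ⟨v,w⟩ = h² Σ_{ij} v_{ij} w_{ij} -/
noncomputable def dInner (M : ℕ) [NeZero M] (h : ℝ) (v w : ZMod M → ZMod M → ℝ) : ℝ :=
  h ^ 2 * ∑ i : ZMod M, ∑ j : ZMod M, v i j * w i j

/-- discrete L² norm -/
noncomputable def dNorm (M : ℕ) [NeZero M] (h : ℝ) (v : ZMod M → ZMod M → ℝ) : ℝ :=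
  Real.sqrt (dInner M h v v)

/-- the operator (1+Δ_h) -/
noncomputable def opA (M : ℕ) (h : ℝ) (v : ZMod M → ZMod M → ℝ) : ZMod M → ZMod M → ℝ :=
  v + dLap M h v

/-- pointwise nonlinearity f(u) = u³ - g u² - ε u -/
noncomputable def fPt (g ε : ℝ) (M : ℕ) (v : ZMod M → ZMod M → ℝ) : ZMod M → ZMod M → ℝ :=
  fun i j => (v i j) ^ 3 - g * (v i j) ^ 2 - ε * v i j

/-- discrete energy E[v] = ½‖(1+Δ_h)v‖² + ¼‖v‖₄⁴ - (g/3)⟨v²,v⟩ - (ε/2)‖v‖² -/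
noncomputable def dEnergy (M : ℕ) [NeZero M] (h g ε : ℝ) (v : ZMod M → ZMod M → ℝ) : ℝ :=
  (1 / 2) * dInner M h (opA M h v) (opA M h v)
    + (1 / 4) * (h ^ 2 * ∑ i : ZMod M, ∑ j : ZMod M, |v i j| ^ 4)
    - (g / 3) * dInner M h (fun i j => (v i j) ^ 2) v
    - (ε / 2) * dInner M h v v

/-- chemical potential μ = (1+Δ_h)² v + f(v) -/
noncomputable def muSH (M : ℕ) (h g ε : ℝ) (v : ZMod M → ZMod M → ℝ) : ZMod M → ZMod M → ℝ :=
  opA M h (opA M h v) + fPt g ε M v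


section SHaux
open MeasureTheory Set

lemma icc_peel {j m : ℕ} (h : j ≤ m) :
    Finset.Icc j m = insert j (Finset.Icc (j+1) m) := by
  ext x; simp only [Finset.mem_Icc, Finset.mem_insert]; omega

lemma sum_peel {j m : ℕ} (h : j ≤ m) (F : ℕ → ℝ) :
    ∑ n ∈ Finset.Icc j m, F n = F j + ∑ n ∈ Finset.Icc (j+1) m, F n := by
  rw [icc_peel h, Finset.sum_insert (by simp)]

lemma tri_aux (m : ℕ) (c v : ℕ → ℝ)
    (hc0 : ∀ k, 1 ≤ k → k ≤ m → 0 ≤ c k)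
    (hmono : ∀ k, 1 ≤ k → k + 1 ≤ m → c k ≤ c (k+1)) :
    ∀ d j, 1 ≤ j → m + 1 ≤ j + d →
      (1/2) * ∑ n ∈ Finset.Icc j m, c n * v n ^ 2
        + (1/2) * c j * (∑ n ∈ Finset.Icc j m, v n)^2
      ≤ ∑ n ∈ Finset.Icc j m, v n * ∑ k ∈ Finset.Icc j n, c k * v k := by
  intro d
  induction d with
  | zero =>
    intro j hj hjm
    rw [Finset.Icc_eq_empty (by omega)]
    simp
  | succ d ih =>
    intro j hj hjm
    by_cases hle : m + 1 ≤ j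
    · rw [Finset.Icc_eq_empty (by omega)]; simp
    · have hjm' : j ≤ m := by omega
      have IH := ih (j+1) (by omega) (by omega)
      set S : ℝ := ∑ n ∈ Finset.Icc (j+1) m, v n with hS
      set P : ℝ := ∑ n ∈ Finset.Icc (j+1) m, c n * v n ^ 2 with hP
      set G : ℝ := ∑ n ∈ Finset.Icc (j+1) m, v n * ∑ k ∈ Finset.Icc (j+1) n, c k * v k with hG
      -- peel the outer sums
      rw [sum_peel hjm' (fun n => c n * v n ^ 2), sum_peel hjm' v,
        sum_peel hjm' (fun n => v n * ∑ k ∈ Finset.Icc j n, c k * v k)]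
      -- inner sums peel
      have hinner : ∀ n ∈ Finset.Icc (j+1) m,
          v n * ∑ k ∈ Finset.Icc j n, c k * v k
            = v n * (c j * v j) + v n * ∑ k ∈ Finset.Icc (j+1) n, c k * v k := by
        intro n hn
        have hn' : j ≤ n := by have := (Finset.mem_Icc.mp hn).1; omega
        rw [sum_peel hn' (fun k => c k * v k)]; ring
      rw [Finset.sum_congr rfl hinner, Finset.sum_add_distrib]
      have hj_self : ∑ k ∈ Finset.Icc j j, c k * v k = c j * v j := by simp
      rw [hj_self]
      have hsum : ∑ n ∈ Finset.Icc (j+1) m, v n * (c j * v j) = (c j * v j) * S := by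
        rw [hS, Finset.mul_sum]; exact Finset.sum_congr rfl (fun n _ => by ring)
      rw [hsum]
      -- key inequality on c j S^2 vs c (j+1) S^2
      have hkey : c j * S^2 ≤ c (j+1) * S^2 := by
        by_cases hjm2 : j + 1 ≤ m
        · have := hmono j hj hjm2
          nlinarith [sq_nonneg S]
        · have : Finset.Icc (j+1) m = ∅ := Finset.Icc_eq_empty (by omega)
          rw [hS, this]; simp
      nlinarith [IH]

lemma tri_sum (m : ℕ) (c v : ℕ → ℝ)
    (hc0 : ∀ k, 1 ≤ k → k ≤ m → 0 ≤ c k)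
    (hmono : ∀ k, 1 ≤ k → k + 1 ≤ m → c k ≤ c (k+1)) :
    (1/2) * ∑ n ∈ Finset.Icc 1 m, c n * v n ^ 2
      ≤ ∑ n ∈ Finset.Icc 1 m, v n * ∑ k ∈ Finset.Icc 1 n, c k * v k := by
  have h := tri_aux m c v hc0 hmono m 1 le_rfl (by omega)
  rcases Nat.eq_zero_or_pos m with hm | hm
  · subst hm; simp
  · have hc1 : 0 ≤ c 1 := hc0 1 le_rfl hm
    nlinarith [sq_nonneg (∑ n ∈ Finset.Icc 1 m, v n)]

lemma gammaInt (α s : ℝ) (hα : 0 < α) (hs : 0 < s) :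
    IntegrableOn (fun l : ℝ => l ^ (α - 1) * Real.exp (-(s * l))) (Ioi 0) := by
  have h := integrableOn_rpow_mul_exp_neg_mul_rpow (p := 1) (s := α - 1) (b := s)
    (by linarith) one_pos hs
  refine h.congr_fun (fun x hx => ?_) measurableSet_Ioi
  beta_reduce; rw [Real.rpow_one]; ring_nf

lemma exp_interval_int (l a b : ℝ) (hl : 0 < l) :
    ∫ s in a..b, Real.exp (-(s * l)) = (Real.exp (-(a*l)) - Real.exp (-(b*l))) / l := by
  have hderiv : ∀ x ∈ Set.uIcc a b, HasDerivAt (fun s => -(1/l) * Real.exp (-(s*l)))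
      (Real.exp (-(x*l))) x := by
    intro x _
    have h1 : HasDerivAt (fun s : ℝ => -(s*l)) (-l) x := by
      exact (hasDerivAt_mul_const l).neg
    have h2 := (Real.hasDerivAt_exp (-(x*l))).comp x h1
    have h3 := h2.const_mul (-(1/l))
    exact h3.congr_deriv (by field_simp)
  rw [intervalIntegral.integral_eq_sub_of_hasDerivAt hderiv]
  · field_simp; ring
  · apply Continuous.intervalIntegrable; continuity

lemma key_rep {α : ℝ} (hα : 0 < α) (hα1 : α < 1) {a b : ℝ} (ha : 0 ≤ a) (hab : a < b) :
    IntegrableOn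
      (fun l : ℝ => (Real.exp (-(a*l)) - Real.exp (-(b*l))) * l ^ (α - 2)) (Ioi 0) ∧
    ∫ l in Ioi (0:ℝ), (Real.exp (-(a*l)) - Real.exp (-(b*l))) * l ^ (α - 2)
      = Real.Gamma α * ((b ^ (1-α) - a ^ (1-α)) / (1-α)) := by
  have hΓ : 0 < Real.Gamma α := Real.Gamma_pos_of_pos hα
  set g : ℝ → ℝ := fun l => (Real.exp (-(a*l)) - Real.exp (-(b*l))) * l ^ (α - 2) with hg
  set V : ℝ := Real.Gamma α * ((b ^ (1-α) - a ^ (1-α)) / (1-α)) with hV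
  have hVnn : 0 ≤ V := by
    have h2 : a ^ (1-α) ≤ b ^ (1-α) := Real.rpow_le_rpow ha hab.le (by linarith)
    have h1α : (0:ℝ) < 1 - α := by linarith
    exact mul_nonneg hΓ.le (div_nonneg (by linarith) h1α.le)
  have hswap :
      ∫⁻ s in Ioc a b, ∫⁻ l in Ioi (0:ℝ),
          ENNReal.ofReal (l ^ (α - 1) * Real.exp (-(s * l)))
        = ∫⁻ l in Ioi (0:ℝ), ∫⁻ s in Ioc a b,
          ENNReal.ofReal (l ^ (α - 1) * Real.exp (-(s * l))) := by
    apply lintegral_lintegral_swap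
    apply Measurable.aemeasurable
    fun_prop
  -- left side
  have hL : ∫⁻ s in Ioc a b, ∫⁻ l in Ioi (0:ℝ),
      ENNReal.ofReal (l ^ (α - 1) * Real.exp (-(s * l))) = ENNReal.ofReal V := by
    have hinner : ∀ s ∈ Ioc a b,
        ∫⁻ l in Ioi (0:ℝ), ENNReal.ofReal (l ^ (α - 1) * Real.exp (-(s * l)))
          = ENNReal.ofReal ((1/s) ^ α * Real.Gamma α) := by
      intro s hs
      have hs0 : 0 < s := lt_of_le_of_lt ha hs.1
      rw [← MeasureTheory.ofReal_integral_eq_lintegral_ofReal (gammaInt α s hα hs0)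
        ((ae_restrict_iff' measurableSet_Ioi).2 (Filter.Eventually.of_forall
          (fun l hl => by
            have hl0 : (0:ℝ) < l := hl
            positivity)))]
      rw [Real.integral_rpow_mul_exp_neg_mul_Ioi hα hs0]
    rw [setLIntegral_congr_fun measurableSet_Ioc
      hinner]
    have hint : IntegrableOn (fun s : ℝ => (1/s) ^ α * Real.Gamma α) (Ioc a b) := by
      have h1 : IntegrableOn (fun s : ℝ => s ^ (-α)) (Ioc a b) :=
        (intervalIntegrable_iff_integrableOn_Ioc_of_le hab.le).1
          (intervalIntegral.intervalIntegrable_rpow' (by linarith))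
      have h2 : IntegrableOn (fun s : ℝ => s ^ (-α) * Real.Gamma α) (Ioc a b) :=
        h1.mul_const (Real.Gamma α)
      refine h2.congr_fun (fun s hs => ?_) measurableSet_Ioc
      have hs0 : 0 < s := lt_of_le_of_lt ha hs.1
      beta_reduce
      rw [one_div, Real.inv_rpow hs0.le, Real.rpow_neg hs0.le]
    rw [← MeasureTheory.ofReal_integral_eq_lintegral_ofReal hint
      ((ae_restrict_iff' measurableSet_Ioc).2 (Filter.Eventually.of_forall
        (fun s hs => by
          have hs0 : 0 < s := lt_of_le_of_lt ha hs.1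
          positivity)))]
    congr 1
    have : ∫ s in Ioc a b, (1/s) ^ α * Real.Gamma α
        = ∫ s in Ioc a b, s ^ (-α) * Real.Gamma α := by
      refine setIntegral_congr_fun measurableSet_Ioc (fun s hs => ?_)
      have hs0 : 0 < s := lt_of_le_of_lt ha hs.1
      rw [one_div, Real.inv_rpow hs0.le, Real.rpow_neg hs0.le]
    rw [this, ← intervalIntegral.integral_of_le hab.le]
    rw [intervalIntegral.integral_mul_const, integral_rpow (Or.inl (by linarith))]
    rw [hV, show -α + 1 = 1 - α by ring]
    ring
  -- right side
  have hR : ∫⁻ l in Ioi (0:ℝ), ∫⁻ s in Ioc a b,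
      ENNReal.ofReal (l ^ (α - 1) * Real.exp (-(s * l)))
        = ∫⁻ l in Ioi (0:ℝ), ENNReal.ofReal (g l) := by
    refine setLIntegral_congr_fun measurableSet_Ioi ?_
    intro l hl
    have hl0 : (0:ℝ) < l := hl
    have hint : IntegrableOn (fun s : ℝ => l ^ (α - 1) * Real.exp (-(s * l))) (Ioc a b) :=
      (Continuous.integrableOn_Ioc (by continuity))
    beta_reduce
    rw [← MeasureTheory.ofReal_integral_eq_lintegral_ofReal hint
      (Filter.Eventually.of_forall (fun s => by positivity))]
    congr 1
    rw [MeasureTheory.integral_const_mul, ← intervalIntegral.integral_of_le hab.le,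
      exp_interval_int l a b hl0, hg]
    have h2 : l ^ (α - 2) = l ^ (α - 1) / l := by
      rw [show α - 2 = (α - 1) - 1 by ring, Real.rpow_sub_one hl0.ne']
    show _ = (Real.exp (-(a * l)) - Real.exp (-(b * l))) * l ^ (α - 2)
    rw [h2]; ring
  have hfin : ∫⁻ l in Ioi (0:ℝ), ENNReal.ofReal (g l) = ENNReal.ofReal V := by
    rw [← hR, ← hswap, hL]
  have hgnn : 0 ≤ᵐ[volume.restrict (Ioi (0:ℝ))] g := by
    refine (ae_restrict_iff' measurableSet_Ioi).2 (Filter.Eventually.of_forall ?_)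
    intro l hl
    have hl0 : (0:ℝ) < l := hl
    have hexp : Real.exp (-(b*l)) ≤ Real.exp (-(a*l)) := by
      apply Real.exp_le_exp.2; nlinarith
    have h2 : (0:ℝ) ≤ l ^ (α - 2) := Real.rpow_nonneg hl0.le _
    exact mul_nonneg (by linarith) h2
  have hgmeas : AEStronglyMeasurable g (volume.restrict (Ioi (0:ℝ))) := by
    apply Measurable.aestronglyMeasurable; fun_prop
  have hgint : IntegrableOn g (Ioi (0:ℝ)) := by
    refine ⟨hgmeas, ?_⟩
    rw [hasFiniteIntegral_iff_ofReal hgnn, hfin]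
    exact ENNReal.ofReal_lt_top
  refine ⟨hgint, ?_⟩
  rw [MeasureTheory.integral_eq_lintegral_of_nonneg_ae hgnn hgmeas, hfin,
    ENNReal.toReal_ofReal hVnn]

lemma aK_closed {α : ℝ} (hα1 : α < 1) (t : ℕ → ℝ) (n k : ℕ) :
    aK α t n k = ((t n - t (k-1)) ^ (1-α) - (t n - t k) ^ (1-α))
      / ((1-α) * Real.Gamma (1-α) * (t k - t (k-1))) := by
  unfold aK omegaK
  have h1 : ∀ s : ℝ, (t n - s) ^ (1 - α - 1) / Real.Gamma (1-α)
      = (fun x : ℝ => x ^ (-α) / Real.Gamma (1-α)) (t n - s) := by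
    intro s; simp only [show (1:ℝ) - α - 1 = -α by ring]
  simp_rw [h1]
  rw [intervalIntegral.integral_comp_sub_left (fun x : ℝ => x ^ (-α) / Real.Gamma (1-α)) (t n)]
  rw [intervalIntegral.integral_div, integral_rpow (Or.inl (by linarith))]
  rw [show -α + 1 = 1 - α by ring]
  field_simp

noncomputable def Kker (α : ℝ) (t : ℕ → ℝ) (n k : ℕ) (l : ℝ) : ℝ :=
  ((Real.exp (-((t n - t k) * l)) - Real.exp (-((t n - t (k-1)) * l))) * l ^ (α - 2))
    / ((t k - t (k-1)) * Real.Gamma α * Real.Gamma (1-α))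

lemma aK_rep {α : ℝ} (hα : 0 < α) (hα1 : α < 1) (t : ℕ → ℝ) (n k : ℕ)
    (hk1 : t (k-1) < t k) (hkn : t k ≤ t n) :
    IntegrableOn (Kker α t n k) (Ioi 0) ∧
    ∫ l in Ioi (0:ℝ), Kker α t n k l = aK α t n k := by
  have hab : t n - t k < t n - t (k-1) := by linarith
  have ha : 0 ≤ t n - t k := by linarith
  obtain ⟨hint, hval⟩ := key_rep hα hα1 ha hab
  have hc : ((t k - t (k-1)) * Real.Gamma α * Real.Gamma (1-α)) ≠ 0 := by
    have h1 : 0 < Real.Gamma α := Real.Gamma_pos_of_pos hα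
    have h2 : 0 < Real.Gamma (1-α) := Real.Gamma_pos_of_pos (by linarith)
    have h3 : (0:ℝ) < t k - t (k-1) := by linarith
    positivity
  constructor
  · exact hint.div_const _
  · unfold Kker
    rw [integral_div, hval, aK_closed hα1]
    have h1 : Real.Gamma α ≠ 0 := ne_of_gt (Real.Gamma_pos_of_pos hα)
    have h2 : (0:ℝ) < 1 - α := by linarith
    have h3 : Real.Gamma (1-α) ≠ 0 := ne_of_gt (Real.Gamma_pos_of_pos h2)
    have h4 : t k - t (k-1) ≠ 0 := by linarith
    field_simp

lemma aK_diag {α : ℝ} (hα : 0 < α) (hα1 : α < 1) (t : ℕ → ℝ) (n : ℕ)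
    (hk1 : t (n-1) < t n) :
    aK α t n n = 1 / ((t n - t (n-1)) ^ α * Real.Gamma (2 - α)) := by
  rw [aK_closed hα1]
  have hτ : (0:ℝ) < t n - t (n-1) := by linarith
  have h2 : (0:ℝ) < 1 - α := by linarith
  rw [sub_self, Real.zero_rpow (by linarith : (1:ℝ) - α ≠ 0)]
  have hΓ : Real.Gamma (2 - α) = (1 - α) * Real.Gamma (1 - α) := by
    rw [show (2:ℝ) - α = (1 - α) + 1 by ring, Real.Gamma_add_one (by linarith)]
  rw [hΓ]
  have h5 : (t n - t (n-1)) ^ (1-α) = (t n - t (n-1)) ^ (-α) * (t n - t (n-1)) := by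
    rw [show (1:ℝ) - α = -α + 1 by ring, Real.rpow_add hτ, Real.rpow_one]
  rw [h5, Real.rpow_neg hτ.le]
  have h6 : (t n - t (n-1)) ^ α ≠ 0 := ne_of_gt (Real.rpow_pos_of_pos hτ α)
  have h7 : Real.Gamma (1-α) ≠ 0 := ne_of_gt (Real.Gamma_pos_of_pos h2)
  field_simp
  ring

lemma exp_diff_le {X Y : ℝ} (h : Y ≤ X) : Real.exp X - Real.exp Y ≤ Real.exp X * (X - Y) := by
  have h1 := Real.add_one_le_exp (Y - X)
  have h2 : Real.exp Y = Real.exp X * Real.exp (Y - X) := by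
    rw [← Real.exp_add]; ring_nf
  nlinarith [Real.exp_pos X]

lemma exp_diff_ge {X Y : ℝ} (h : Y ≤ X) : Real.exp Y * (X - Y) ≤ Real.exp X - Real.exp Y := by
  have h1 := Real.add_one_le_exp (X - Y)
  have h2 : Real.exp X = Real.exp Y * Real.exp (X - Y) := by
    rw [← Real.exp_add]; ring_nf
  nlinarith [Real.exp_pos Y]

lemma scalarQF {α : ℝ} (hα : 0 < α) (hα1 : α < 1) (t : ℕ → ℝ) (N : ℕ)
    (htmono : ∀ k, k < N → t k < t (k + 1)) (m : ℕ) (hmN : m ≤ N) (x : ℕ → ℝ) :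
    (1/2) * ∑ n ∈ Finset.Icc 1 m, aK α t n n * x n ^ 2
      ≤ ∑ n ∈ Finset.Icc 1 m, x n * ∑ k ∈ Finset.Icc 1 n, aK α t n k * x k := by
  have tstep : ∀ k, 1 ≤ k → k ≤ N → t (k-1) < t k := by
    intro k h1 h2
    have := htmono (k-1) (by omega)
    rwa [Nat.sub_add_cancel h1] at this
  have tmono : ∀ j n, j ≤ n → n ≤ N → t j ≤ t n := by
    intro j n hjn hnN
    induction n with
    | zero => have : j = 0 := by omega
              simp [this]
    | succ p ih =>
      rcases Nat.lt_or_ge j (p+1) with h | h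
      · have h2 := ih (by omega) (by omega)
        have h3 := htmono p (by omega)
        linarith
      · have : j = p + 1 := by omega
        simp [this]
  -- basic facts for indices in range
  have hfacts : ∀ n ∈ Finset.Icc 1 m, ∀ k ∈ Finset.Icc 1 n,
      t (k-1) < t k ∧ t k ≤ t n := by
    intro n hn k hk
    simp only [Finset.mem_Icc] at hn hk
    exact ⟨tstep k hk.1 (by omega), tmono k n hk.2 (by omega)⟩
  -- per-n integrand
  set G : ℕ → ℝ → ℝ := fun n l =>
    x n * ∑ k ∈ Finset.Icc 1 n, Kker α t n k l * x k
      - (1/2) * (Kker α t n n l * x n ^ 2) with hG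
  have hGint : ∀ n ∈ Finset.Icc 1 m, IntegrableOn (G n) (Ioi 0) := by
    intro n hn
    have h1 : IntegrableOn (fun l => ∑ k ∈ Finset.Icc 1 n, Kker α t n k l * x k) (Ioi 0) := by
      apply integrable_finset_sum
      intro k hk
      exact ((aK_rep hα hα1 t n k (hfacts n hn k hk).1 (hfacts n hn k hk).2).1).mul_const _
    have h2 : IntegrableOn (Kker α t n n) (Ioi 0) := by
      have hself : n ∈ Finset.Icc 1 n := by
        simp only [Finset.mem_Icc] at hn ⊢; omega
      exact (aK_rep hα hα1 t n n (hfacts n hn n hself).1 (hfacts n hn n hself).2).1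
    exact (h1.const_mul _).sub ((h2.mul_const _).const_mul _)
  have hGval : ∀ n ∈ Finset.Icc 1 m, ∫ l in Ioi (0:ℝ), G n l
      = x n * ∑ k ∈ Finset.Icc 1 n, aK α t n k * x k - (1/2) * (aK α t n n * x n ^ 2) := by
    intro n hn
    have h1 : IntegrableOn (fun l => ∑ k ∈ Finset.Icc 1 n, Kker α t n k l * x k) (Ioi 0) := by
      apply integrable_finset_sum
      intro k hk
      exact ((aK_rep hα hα1 t n k (hfacts n hn k hk).1 (hfacts n hn k hk).2).1).mul_const _
    have hself : n ∈ Finset.Icc 1 n := by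
      simp only [Finset.mem_Icc] at hn ⊢; omega
    have h2 : IntegrableOn (Kker α t n n) (Ioi 0) :=
      (aK_rep hα hα1 t n n (hfacts n hn n hself).1 (hfacts n hn n hself).2).1
    rw [hG]
    rw [MeasureTheory.integral_sub ((h1.const_mul _)) ((h2.mul_const _).const_mul _)]
    rw [MeasureTheory.integral_const_mul, MeasureTheory.integral_const_mul,
      MeasureTheory.integral_mul_const, MeasureTheory.integral_finset_sum]
    · rw [(aK_rep hα hα1 t n n (hfacts n hn n hself).1 (hfacts n hn n hself).2).2]
      congr 2
      refine Finset.sum_congr rfl (fun k hk => ?_)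
      rw [MeasureTheory.integral_mul_const,
        (aK_rep hα hα1 t n k (hfacts n hn k hk).1 (hfacts n hn k hk).2).2]
    · intro k hk
      exact ((aK_rep hα hα1 t n k (hfacts n hn k hk).1 (hfacts n hn k hk).2).1).mul_const _
  -- pointwise nonnegativity
  have hΦnn : ∀ l ∈ Ioi (0:ℝ), 0 ≤ ∑ n ∈ Finset.Icc 1 m, G n l := by
    intro l hl
    have hl0 : (0:ℝ) < l := hl
    set c : ℕ → ℝ := fun k =>
      Real.exp (l * t k) * ((Real.exp (l * t k) - Real.exp (l * t (k-1))) / (t k - t (k-1)))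
      with hc
    set v : ℕ → ℝ := fun n => x n * Real.exp (-(l * t n)) with hv
    set κ : ℝ := l ^ (α - 2) / (Real.Gamma α * Real.Gamma (1 - α)) with hκdef
    have hΓα : 0 < Real.Gamma α := Real.Gamma_pos_of_pos hα
    have hΓ1α : 0 < Real.Gamma (1-α) := Real.Gamma_pos_of_pos (by linarith)
    have hκ : 0 ≤ κ := by
      have : (0:ℝ) ≤ l ^ (α - 2) := Real.rpow_nonneg hl0.le _
      positivity
    have hKid : ∀ n k : ℕ, t (k-1) < t k → x n * (Kker α t n k l * x k)
        = κ * (v n * (c k * v k)) := by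
      intro n k hk1
      have hτ : t k - t (k-1) ≠ 0 := by linarith
      rw [hv, hc, hκdef]
      simp only []
      unfold Kker
      rw [show -((t n - t k) * l) = l * t k + -(l * t n) by ring, Real.exp_add]
      rw [show -((t n - t (k-1)) * l) = l * t (k-1) + -(l * t n) by ring, Real.exp_add]
      rw [Real.exp_neg (l * t n), Real.exp_neg (l * t k)]
      have e1 : Real.exp (l * t n) ≠ 0 := Real.exp_ne_zero _
      have e2 : Real.exp (l * t k) ≠ 0 := Real.exp_ne_zero _
      field_simp
    have hKdiag : ∀ n : ℕ, t (n-1) < t n → (1/2) * (Kker α t n n l * x n ^ 2)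
        = κ * ((1/2) * (c n * v n ^ 2)) := by
      intro n hk1
      have hτ : t n - t (n-1) ≠ 0 := by linarith
      rw [hv, hc, hκdef]
      simp only []
      unfold Kker
      rw [sub_self, zero_mul, neg_zero, Real.exp_zero]
      rw [show -((t n - t (n-1)) * l) = l * t (n-1) + -(l * t n) by ring, Real.exp_add]
      rw [Real.exp_neg (l * t n)]
      have e1 : Real.exp (l * t n) ≠ 0 := Real.exp_ne_zero _
      field_simp
    -- conditions on c
    have hc0 : ∀ k, 1 ≤ k → k ≤ m → 0 ≤ c k := by
      intro k h1 h2
      have hτ : (0:ℝ) < t k - t (k-1) := by linarith [tstep k h1 (by omega)]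
      have hee : Real.exp (l * t (k-1)) ≤ Real.exp (l * t k) := by
        apply Real.exp_le_exp.2
        have := tstep k h1 (by omega)
        nlinarith
      rw [hc]
      have : (0:ℝ) ≤ (Real.exp (l * t k) - Real.exp (l * t (k-1))) / (t k - t (k-1)) := by
        apply div_nonneg (by linarith) hτ.le
      positivity
    have hcmono : ∀ k, 1 ≤ k → k + 1 ≤ m → c k ≤ c (k+1) := by
      intro k h1 h2
      have hs1 : t (k-1) < t k := tstep k h1 (by omega)
      have hs2 : t k < t (k+1) := by
        have := tstep (k+1) (by omega) (by omega)
        simpa using this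
      have hτ1 : (0:ℝ) < t k - t (k-1) := by linarith
      have hτ2 : (0:ℝ) < t (k+1) - t k := by linarith
      have hup : (Real.exp (l * t k) - Real.exp (l * t (k-1))) / (t k - t (k-1))
          ≤ l * Real.exp (l * t k) := by
        have := exp_diff_le (X := l * t k) (Y := l * t (k-1)) (by nlinarith)
        rw [div_le_iff₀ hτ1]
        nlinarith
      have hlo : l * Real.exp (l * t k)
          ≤ (Real.exp (l * t (k+1)) - Real.exp (l * t k)) / (t (k+1) - t k) := by
        have := exp_diff_ge (X := l * t (k+1)) (Y := l * t k) (by nlinarith)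
        rw [le_div_iff₀ hτ2]
        have h4 : (k+1) - 1 = k := by omega
        nlinarith
      have h4 : (k+1) - 1 = k := by omega
      rw [hc]
      simp only [h4]
      have he1 : (0:ℝ) < Real.exp (l * t k) := Real.exp_pos _
      have he2 : Real.exp (l * t k) ≤ Real.exp (l * t (k+1)) := by
        apply Real.exp_le_exp.2; nlinarith
      calc Real.exp (l * t k) * ((Real.exp (l * t k) - Real.exp (l * t (k-1))) / (t k - t (k-1)))
          ≤ Real.exp (l * t k) * (l * Real.exp (l * t k)) := by
            apply mul_le_mul_of_nonneg_left hup he1.le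
        _ ≤ Real.exp (l * t (k+1)) * (l * Real.exp (l * t k)) := by
            apply mul_le_mul_of_nonneg_right he2
            positivity
        _ ≤ Real.exp (l * t (k+1)) * ((Real.exp (l * t (k+1)) - Real.exp (l * t k)) / (t (k+1) - t k)) := by
            apply mul_le_mul_of_nonneg_left hlo (Real.exp_pos _).le
    have htri := tri_sum m c v hc0 hcmono
    -- rewrite the sum
    have step1 : ∑ n ∈ Finset.Icc 1 m, G n l
        = ∑ n ∈ Finset.Icc 1 m,
            (κ * (v n * ∑ k ∈ Finset.Icc 1 n, c k * v k) - κ * ((1/2) * (c n * v n ^ 2))) := by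
      refine Finset.sum_congr rfl (fun n hn => ?_)
      simp only [Finset.mem_Icc] at hn
      have hd : t (n-1) < t n := tstep n hn.1 (by omega)
      rw [hG]
      simp only []
      rw [hKdiag n hd]
      congr 1
      rw [Finset.mul_sum, Finset.mul_sum, Finset.mul_sum]
      refine Finset.sum_congr rfl (fun k hk => ?_)
      simp only [Finset.mem_Icc] at hk
      have := hKid n k (tstep k hk.1 (by omega))
      rw [this]
    rw [step1, Finset.sum_sub_distrib, ← Finset.mul_sum, ← Finset.mul_sum, ← mul_sub]
    apply mul_nonneg hκ
    rw [← Finset.mul_sum]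
    linarith
  -- combine
  have hsum : ∑ n ∈ Finset.Icc 1 m, (x n * ∑ k ∈ Finset.Icc 1 n, aK α t n k * x k
      - (1/2) * (aK α t n n * x n ^ 2)) = ∫ l in Ioi (0:ℝ), ∑ n ∈ Finset.Icc 1 m, G n l := by
    rw [MeasureTheory.integral_finset_sum _ hGint]
    exact (Finset.sum_congr rfl (fun n hn => (hGval n hn).symm))
  have hnn : 0 ≤ ∫ l in Ioi (0:ℝ), ∑ n ∈ Finset.Icc 1 m, G n l :=
    setIntegral_nonneg measurableSet_Ioi hΦnn
  rw [← hsum] at hnn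
  rw [Finset.sum_sub_distrib] at hnn
  rw [Finset.mul_sum]
  linarith [hnn]

section
variable (M : ℕ) [NeZero M] (h : ℝ)

lemma dInner_symm (v w : ZMod M → ZMod M → ℝ) : dInner M h v w = dInner M h w v := by
  unfold dInner; congr 1; refine Finset.sum_congr rfl (fun i _ => ?_)
  exact Finset.sum_congr rfl (fun j _ => mul_comm _ _)

lemma dInner_self_nonneg (v : ZMod M → ZMod M → ℝ) : 0 ≤ dInner M h v v := by
  unfold dInner
  apply mul_nonneg (by positivity)
  apply Finset.sum_nonneg; intro i _
  apply Finset.sum_nonneg; intro j _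
  exact mul_self_nonneg _

-- index shift lemmas
lemma shift1 (v w : ZMod M → ZMod M → ℝ) :
    ∑ i : ZMod M, ∑ j : ZMod M, v (i+1) j * w i j
      = ∑ i : ZMod M, ∑ j : ZMod M, v i j * w (i-1) j := by
  apply Fintype.sum_equiv (Equiv.addRight (1 : ZMod M))
  intro i
  simp [Equiv.coe_addRight, add_sub_cancel_right]

lemma shift2 (v w : ZMod M → ZMod M → ℝ) :
    ∑ i : ZMod M, ∑ j : ZMod M, v (i-1) j * w i j
      = ∑ i : ZMod M, ∑ j : ZMod M, v i j * w (i+1) j := by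
  apply Fintype.sum_equiv (Equiv.subRight (1 : ZMod M))
  intro i
  simp [Equiv.subRight_apply, sub_add_cancel]

lemma shift3 (v w : ZMod M → ZMod M → ℝ) :
    ∑ i : ZMod M, ∑ j : ZMod M, v i (j+1) * w i j
      = ∑ i : ZMod M, ∑ j : ZMod M, v i j * w i (j-1) := by
  refine Finset.sum_congr rfl (fun i _ => ?_)
  apply Fintype.sum_equiv (Equiv.addRight (1 : ZMod M))
  intro j
  simp [Equiv.coe_addRight, add_sub_cancel_right]

lemma shift4 (v w : ZMod M → ZMod M → ℝ) :
    ∑ i : ZMod M, ∑ j : ZMod M, v i (j-1) * w i j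
      = ∑ i : ZMod M, ∑ j : ZMod M, v i j * w i (j+1) := by
  refine Finset.sum_congr rfl (fun i _ => ?_)
  apply Fintype.sum_equiv (Equiv.subRight (1 : ZMod M))
  intro j
  simp [Equiv.subRight_apply, sub_add_cancel]

lemma dLap_adj (v w : ZMod M → ZMod M → ℝ) :
    dInner M h (dLap M h v) w = dInner M h v (dLap M h w) := by
  unfold dInner dLap
  congr 1
  have expand1 : ∀ i j,
      (v (i+1) j + v (i-1) j + v i (j+1) + v i (j-1) - 4 * v i j) / h ^ 2 * w i j
      = (v (i+1) j * w i j + v (i-1) j * w i j + v i (j+1) * w i j + v i (j-1) * w i j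
          - 4 * (v i j * w i j)) / h ^ 2 := by intro i j; ring
  have expand2 : ∀ i j,
      v i j * ((w (i+1) j + w (i-1) j + w i (j+1) + w i (j-1) - 4 * w i j) / h ^ 2)
      = (v i j * w (i+1) j + v i j * w (i-1) j + v i j * w i (j+1) + v i j * w i (j-1)
          - 4 * (v i j * w i j)) / h ^ 2 := by intro i j; ring
  simp only [expand1, expand2]
  simp_rw [← Finset.sum_div]
  congr 1
  simp only [Finset.sum_sub_distrib, Finset.sum_add_distrib]
  rw [shift1 M v w, shift2 M v w, shift3 M v w, shift4 M v w]
  ring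

lemma opA_adj (v w : ZMod M → ZMod M → ℝ) :
    dInner M h (opA M h v) w = dInner M h v (opA M h w) := by
  unfold opA dInner
  have e1 : ∀ i j, (v + dLap M h v) i j * w i j = v i j * w i j + (dLap M h v) i j * w i j := by
    intro i j; simp [Pi.add_apply]; ring
  have e2 : ∀ i j, v i j * (w + dLap M h w) i j = v i j * w i j + v i j * (dLap M h w) i j := by
    intro i j; simp [Pi.add_apply]; ring
  simp_rw [e1, e2, Finset.sum_add_distrib, mul_add]
  have := dLap_adj M h v w
  unfold dInner at this
  linarith [this]

end

section
variable (M : ℕ) [NeZero M] (h : ℝ)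

lemma dInner_add_left (u v w : ZMod M → ZMod M → ℝ) :
    dInner M h (u + v) w = dInner M h u w + dInner M h v w := by
  unfold dInner
  simp only [Pi.add_apply, add_mul, Finset.sum_add_distrib]
  ring

lemma dInner_sub_left (u v w : ZMod M → ZMod M → ℝ) :
    dInner M h (u - v) w = dInner M h u w - dInner M h v w := by
  unfold dInner
  simp only [Pi.sub_apply, sub_mul, Finset.sum_sub_distrib]
  ring

lemma dInner_sub_right (u v w : ZMod M → ZMod M → ℝ) :
    dInner M h u (v - w) = dInner M h u v - dInner M h u w := by
  rw [dInner_symm, dInner_sub_left, dInner_symm M h v u, dInner_symm M h w u]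

lemma dInner_neg_left (u w : ZMod M → ZMod M → ℝ) :
    dInner M h (-u) w = - dInner M h u w := by
  unfold dInner
  simp only [Pi.neg_apply, neg_mul, Finset.sum_neg_distrib]
  ring

lemma dInner_smul_left (r : ℝ) (u w : ZMod M → ZMod M → ℝ) :
    dInner M h (r • u) w = r * dInner M h u w := by
  unfold dInner
  simp only [Pi.smul_apply, smul_eq_mul, mul_assoc, ← Finset.mul_sum]
  ring

lemma dInner_sum_left {ι : Type*} (s : Finset ι) (F : ι → (ZMod M → ZMod M → ℝ))
    (w : ZMod M → ZMod M → ℝ) :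
    dInner M h (∑ k ∈ s, F k) w = ∑ k ∈ s, dInner M h (F k) w := by
  classical
  induction s using Finset.cons_induction with
  | empty => simp [dInner]
  | cons a s ha ih =>
    rw [Finset.sum_cons, Finset.sum_cons, dInner_add_left, ih]

lemma opA_sub (a b : ZMod M → ZMod M → ℝ) :
    opA M h (a - b) = opA M h a - opA M h b := by
  funext i j
  simp only [opA, dLap, Pi.sub_apply, Pi.add_apply]
  ring

lemma ptwise (g ε x y : ℝ) :
    (1/4)*x^4 - (g/3)*(x^2*x) - (ε/2)*(x*x)
      - ((1/4)*y^4 - (g/3)*(y^2*y) - (ε/2)*(y*y))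
      - (x^3 - g*x^2 - ε*x)*(x-y) - ((g^2/3+ε)/2)*((x-y)*(x-y)) ≤ 0 := by
  nlinarith [sq_nonneg ((x-y)*(x+y-2*g/3)), sq_nonneg ((x-y)*(x-g/3))]

lemma estep (g ε : ℝ) (a b : ZMod M → ZMod M → ℝ) :
    dEnergy M h g ε a - dEnergy M h g ε b
      ≤ dInner M h (muSH M h g ε a) (a - b)
        + ((g^2/3 + ε)/2) * dInner M h (a - b) (a - b) := by
  have habs : ∀ x : ℝ, |x| ^ 4 = x ^ 4 := by
    intro x; rw [← abs_pow]; exact abs_of_nonneg (by positivity)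
  -- quadratic identity
  have hq1 : dInner M h (opA M h (opA M h a)) (a - b)
      = dInner M h (opA M h a) (opA M h a) - dInner M h (opA M h a) (opA M h b) := by
    rw [opA_adj, opA_sub, dInner_sub_right]
  have hq2 : dInner M h (opA M h (a-b)) (opA M h (a-b))
      = dInner M h (opA M h a) (opA M h a) - 2 * dInner M h (opA M h a) (opA M h b)
        + dInner M h (opA M h b) (opA M h b) := by
    rw [opA_sub, dInner_sub_left, dInner_sub_right, dInner_sub_right,
      dInner_symm M h (opA M h b) (opA M h a)]
    ring
  have hqnn : 0 ≤ dInner M h (opA M h (a-b)) (opA M h (a-b)) := dInner_self_nonneg M h _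
  -- nonlinear part
  set Φ : ZMod M → ZMod M → ℝ := fun i j =>
    (1/4)*(a i j)^4 - (g/3)*((a i j)^2*(a i j)) - (ε/2)*((a i j)*(a i j))
      - ((1/4)*(b i j)^4 - (g/3)*((b i j)^2*(b i j)) - (ε/2)*((b i j)*(b i j)))
      - ((a i j)^3 - g*(a i j)^2 - ε*(a i j))*((a i j)-(b i j))
      - ((g^2/3+ε)/2)*(((a i j)-(b i j))*((a i j)-(b i j))) with hΦ
  have hΦle : ∑ i : ZMod M, ∑ j : ZMod M, Φ i j ≤ 0 := by
    apply Finset.sum_nonpos; intro i _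
    apply Finset.sum_nonpos; intro j _
    exact ptwise g ε (a i j) (b i j)
  have hNL :
      ((1 / 4) * (h ^ 2 * ∑ i : ZMod M, ∑ j : ZMod M, |a i j| ^ 4)
        - (g / 3) * dInner M h (fun i j => (a i j) ^ 2) a
        - (ε / 2) * dInner M h a a)
      - ((1 / 4) * (h ^ 2 * ∑ i : ZMod M, ∑ j : ZMod M, |b i j| ^ 4)
        - (g / 3) * dInner M h (fun i j => (b i j) ^ 2) b
        - (ε / 2) * dInner M h b b)
      - dInner M h (fPt g ε M a) (a - b)
      - ((g^2/3 + ε)/2) * dInner M h (a-b) (a-b)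
      = h ^ 2 * ∑ i : ZMod M, ∑ j : ZMod M, Φ i j := by
    unfold dInner fPt
    simp only [Pi.sub_apply, habs]
    rw [hΦ]
    simp only [Finset.mul_sum, ← Finset.sum_sub_distrib]
    refine Finset.sum_congr rfl (fun i _ => ?_)
    refine Finset.sum_congr rfl (fun j _ => ?_)
    ring
  have hmul : h ^ 2 * ∑ i : ZMod M, ∑ j : ZMod M, Φ i j ≤ 0 :=
    mul_nonpos_of_nonneg_of_nonpos (by positivity) hΦle
  have hmu : dInner M h (muSH M h g ε a) (a - b)
      = dInner M h (opA M h (opA M h a)) (a - b) + dInner M h (fPt g ε M a) (a - b) := by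
    unfold muSH
    rw [dInner_add_left]
  unfold dEnergy
  rw [hmu]
  linarith [hNL, hmul, hq1, hq2, hqnn]
end

lemma vecQF (M : ℕ) [NeZero M] (h : ℝ) {α : ℝ} (hα : 0 < α) (hα1 : α < 1) (t : ℕ → ℝ) (N : ℕ)
    (htmono : ∀ k, k < N → t k < t (k + 1)) (m : ℕ) (hmN : m ≤ N)
    (w : ℕ → ZMod M → ZMod M → ℝ) :
    (1/2) * ∑ n ∈ Finset.Icc 1 m, aK α t n n * dInner M h (w n) (w n)
      ≤ ∑ n ∈ Finset.Icc 1 m, ∑ k ∈ Finset.Icc 1 n, aK α t n k * dInner M h (w k) (w n) := by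
  have swap3 : ∀ (f : ℕ → ZMod M → ZMod M → ℝ) (s : Finset ℕ),
      ∑ n ∈ s, ∑ i : ZMod M, ∑ j : ZMod M, f n i j
        = ∑ i : ZMod M, ∑ j : ZMod M, ∑ n ∈ s, f n i j := by
    intro f s
    rw [Finset.sum_comm]
    exact Finset.sum_congr rfl (fun i _ => Finset.sum_comm)
  have lhs_eq : ∑ n ∈ Finset.Icc 1 m, aK α t n n * dInner M h (w n) (w n)
      = h^2 * ∑ i : ZMod M, ∑ j : ZMod M,
          ∑ n ∈ Finset.Icc 1 m, aK α t n n * (w n i j)^2 := by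
    rw [← swap3 (fun n i j => aK α t n n * (w n i j)^2) (Finset.Icc 1 m), Finset.mul_sum]
    refine Finset.sum_congr rfl (fun n _ => ?_)
    unfold dInner
    rw [show aK α t n n * (h ^ 2 * ∑ i : ZMod M, ∑ j : ZMod M, w n i j * w n i j)
      = h^2 * (aK α t n n * ∑ i : ZMod M, ∑ j : ZMod M, w n i j * w n i j) by ring]
    congr 1
    rw [Finset.mul_sum]
    refine Finset.sum_congr rfl (fun i _ => ?_)
    rw [Finset.mul_sum]
    exact Finset.sum_congr rfl (fun j _ => by ring)
  have rhs_eq : ∑ n ∈ Finset.Icc 1 m, ∑ k ∈ Finset.Icc 1 n, aK α t n k * dInner M h (w k) (w n)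
      = h^2 * ∑ i : ZMod M, ∑ j : ZMod M,
          ∑ n ∈ Finset.Icc 1 m, (w n i j) * ∑ k ∈ Finset.Icc 1 n, aK α t n k * (w k i j) := by
    have inner_eq : ∀ n, ∀ i j : ZMod M,
        (w n i j) * ∑ k ∈ Finset.Icc 1 n, aK α t n k * (w k i j)
          = ∑ k ∈ Finset.Icc 1 n, aK α t n k * (w k i j * w n i j) := by
      intro n i j
      rw [Finset.mul_sum]
      exact Finset.sum_congr rfl (fun k _ => by ring)
    calc ∑ n ∈ Finset.Icc 1 m, ∑ k ∈ Finset.Icc 1 n, aK α t n k * dInner M h (w k) (w n)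
        = ∑ n ∈ Finset.Icc 1 m, (h^2 * ∑ i : ZMod M, ∑ j : ZMod M,
            ∑ k ∈ Finset.Icc 1 n, aK α t n k * (w k i j * w n i j)) := by
          refine Finset.sum_congr rfl (fun n _ => ?_)
          rw [← swap3 (fun k i j => aK α t n k * (w k i j * w n i j)) (Finset.Icc 1 n),
            Finset.mul_sum]
          refine Finset.sum_congr rfl (fun k _ => ?_)
          unfold dInner
          rw [show aK α t n k * (h ^ 2 * ∑ i : ZMod M, ∑ j : ZMod M, w k i j * w n i j)
            = h^2 * (aK α t n k * ∑ i : ZMod M, ∑ j : ZMod M, w k i j * w n i j) by ring]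
          congr 1
          rw [Finset.mul_sum]
          refine Finset.sum_congr rfl (fun i _ => ?_)
          rw [Finset.mul_sum]
      _ = h^2 * ∑ n ∈ Finset.Icc 1 m, ∑ i : ZMod M, ∑ j : ZMod M,
            ∑ k ∈ Finset.Icc 1 n, aK α t n k * (w k i j * w n i j) := by
          rw [Finset.mul_sum]
      _ = h^2 * ∑ i : ZMod M, ∑ j : ZMod M, ∑ n ∈ Finset.Icc 1 m,
            ∑ k ∈ Finset.Icc 1 n, aK α t n k * (w k i j * w n i j) := by
          rw [swap3 (fun n i j => ∑ k ∈ Finset.Icc 1 n, aK α t n k * (w k i j * w n i j))]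
      _ = h^2 * ∑ i : ZMod M, ∑ j : ZMod M,
            ∑ n ∈ Finset.Icc 1 m, (w n i j) * ∑ k ∈ Finset.Icc 1 n, aK α t n k * (w k i j) := by
          congr 1
          refine Finset.sum_congr rfl (fun i _ => ?_)
          refine Finset.sum_congr rfl (fun j _ => ?_)
          exact Finset.sum_congr rfl (fun n _ => (inner_eq n i j).symm)
  rw [lhs_eq, rhs_eq]
  rw [show (1:ℝ)/2 * (h^2 * ∑ i : ZMod M, ∑ j : ZMod M,
      ∑ n ∈ Finset.Icc 1 m, aK α t n n * (w n i j)^2)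
    = h^2 * ∑ i : ZMod M, ∑ j : ZMod M,
      ((1:ℝ)/2 * ∑ n ∈ Finset.Icc 1 m, aK α t n n * (w n i j)^2) by
        rw [Finset.mul_sum, Finset.mul_sum]
        rw [show h^2 * ∑ i : ZMod M, ∑ j : ZMod M, ((1:ℝ)/2 * ∑ n ∈ Finset.Icc 1 m,
          aK α t n n * (w n i j)^2) = ∑ i : ZMod M, h^2 * ∑ j : ZMod M, ((1:ℝ)/2 *
          ∑ n ∈ Finset.Icc 1 m, aK α t n n * (w n i j)^2) by rw [Finset.mul_sum]]
        refine Finset.sum_congr rfl (fun i _ => ?_)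
        rw [Finset.mul_sum, Finset.mul_sum, Finset.mul_sum]
        exact Finset.sum_congr rfl (fun j _ => by ring)]
  apply mul_le_mul_of_nonneg_left _ (by positivity : (0:ℝ) ≤ h^2)
  apply Finset.sum_le_sum; intro i _
  apply Finset.sum_le_sum; intro j _
  exact scalarQF hα hα1 t N htmono m hmN (fun k => w k i j)

theorem decay
    (L : ℝ) (hL : 0 < L) (M : ℕ) [NeZero M]
    (g ε : ℝ) (hg : 0 ≤ g) (hε : 0 < ε)
    (N : ℕ) (α : ℝ) (hα : 0 < α ∧ α < 1)
    (t : ℕ → ℝ)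
    (htmono : ∀ k, k < N → t k < t (k + 1))
    (hτ : ∀ k, 1 ≤ k → k ≤ N →
      (t k - t (k - 1)) ^ α ≤ 3 / (Real.Gamma (2 - α) * (4 * g ^ 2 + 3 * ε)))
    (u : ℕ → ZMod M → ZMod M → ℝ)
    (hscheme : ∀ n, 1 ≤ n → n ≤ N →
      (∑ k ∈ Finset.Icc 1 n, aK α t n k • (u k - u (k - 1)))
        = -(muSH M (L / M) g ε (u n))) :
    ∀ m, 1 ≤ m → m ≤ N → dEnergy M (L/M) g ε (u m) ≤ dEnergy M (L/M) g ε (u 0) := by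
  obtain ⟨hα0, hα1⟩ := hα
  set h : ℝ := L / M with hh
  set E : ℕ → ℝ := fun n => dEnergy M h g ε (u n) with hE
  set w : ℕ → ZMod M → ZMod M → ℝ := fun n => u n - u (n-1) with hw
  have tstep : ∀ k, 1 ≤ k → k ≤ N → t (k-1) < t k := by
    intro k h1 h2
    have := htmono (k-1) (by omega)
    rwa [Nat.sub_add_cancel h1] at this
  have hΓpos : 0 < Real.Gamma (2 - α) := Real.Gamma_pos_of_pos (by linarith)
  -- diagonal kernel lower bound
  have haKnn : ∀ n, 1 ≤ n → n ≤ N → g^2/3 + ε ≤ aK α t n n := by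
    intro n h1 h2
    rw [aK_diag hα0 hα1 t n (tstep n h1 h2)]
    have hτpos : (0:ℝ) < t n - t (n-1) := by linarith [tstep n h1 h2]
    have hXpos : (0:ℝ) < (t n - t (n-1)) ^ α := Real.rpow_pos_of_pos hτpos α
    have hden : (0:ℝ) < 4 * g ^ 2 + 3 * ε := by positivity
    have h3 := hτ n h1 h2
    have h4 : (t n - t (n-1)) ^ α * Real.Gamma (2 - α) ≤ 3 / (4 * g ^ 2 + 3 * ε) := by
      calc (t n - t (n-1)) ^ α * Real.Gamma (2 - α)
          ≤ (3 / (Real.Gamma (2 - α) * (4 * g ^ 2 + 3 * ε))) * Real.Gamma (2 - α) := by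
            apply mul_le_mul_of_nonneg_right h3 hΓpos.le
        _ = 3 / (4 * g ^ 2 + 3 * ε) := by field_simp
    have h5 : (4 * g ^ 2 + 3 * ε) / 3 ≤ 1 / ((t n - t (n-1)) ^ α * Real.Gamma (2 - α)) := by
      rw [div_le_div_iff₀ (by norm_num) (by positivity)]
      have := mul_le_mul_of_nonneg_left h4 hden.le
      calc (4 * g ^ 2 + 3 * ε) * ((t n - t (n-1)) ^ α * Real.Gamma (2 - α))
          ≤ (4 * g ^ 2 + 3 * ε) * (3 / (4 * g ^ 2 + 3 * ε)) := this
        _ = 3 := by field_simp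
        _ = 1 * 3 := by ring
    calc g^2/3 + ε ≤ (4 * g ^ 2 + 3 * ε) / 3 := by nlinarith
      _ ≤ _ := h5
  intro m hm1 hmN
  -- telescoping
  have htel : ∑ n ∈ Finset.Icc 1 m, (E n - E (n-1)) = E m - E 0 := by
    rw [← Finset.Ico_add_one_right_eq_Icc, Finset.sum_Ico_eq_sum_range]
    have hr : m + 1 - 1 = m := by omega
    rw [hr]
    have : ∀ i, E (1 + i) - E (1 + i - 1) = E (i + 1) - E i := by
      intro i
      congr 1
      · rw [add_comm]
      · congr 1; omega
    simp_rw [this]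
    exact Finset.sum_range_sub E m
  -- per-step estimate
  have hstep : ∀ n ∈ Finset.Icc 1 m, E n - E (n-1)
      ≤ - ∑ k ∈ Finset.Icc 1 n, aK α t n k * dInner M h (w k) (w n)
        + ((g^2/3 + ε)/2) * dInner M h (w n) (w n) := by
    intro n hn
    simp only [Finset.mem_Icc] at hn
    have hmu : muSH M h g ε (u n) = -(∑ k ∈ Finset.Icc 1 n, aK α t n k • (u k - u (k-1))) := by
      rw [hscheme n hn.1 (by omega)]; simp
    have h1 := estep M h g ε (u n) (u (n-1))
    have h2 : dInner M h (muSH M h g ε (u n)) (u n - u (n-1))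
        = - ∑ k ∈ Finset.Icc 1 n, aK α t n k * dInner M h (w k) (w n) := by
      rw [hmu, dInner_neg_left, dInner_sum_left]
      congr 1
      refine Finset.sum_congr rfl (fun k _ => ?_)
      rw [dInner_smul_left]
    rw [h2] at h1
    exact h1
  have hsum := Finset.sum_le_sum hstep
  rw [htel] at hsum
  rw [Finset.sum_add_distrib] at hsum
  have hQF := vecQF M h hα0 hα1 t N htmono m hmN w
  have hfinal : ∑ n ∈ Finset.Icc 1 m,
      (-∑ k ∈ Finset.Icc 1 n, aK α t n k * dInner M h (w k) (w n))
      + ∑ n ∈ Finset.Icc 1 m, ((g^2/3 + ε)/2) * dInner M h (w n) (w n) ≤ 0 := by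
    rw [Finset.sum_neg_distrib]
    have hdiag : ∑ n ∈ Finset.Icc 1 m, ((g^2/3 + ε)/2) * dInner M h (w n) (w n)
        ≤ (1/2) * ∑ n ∈ Finset.Icc 1 m, aK α t n n * dInner M h (w n) (w n) := by
      rw [Finset.mul_sum]
      apply Finset.sum_le_sum
      intro n hn
      simp only [Finset.mem_Icc] at hn
      have h3 := haKnn n hn.1 (by omega)
      have h4 := dInner_self_nonneg M h (w n)
      calc ((g^2/3 + ε)/2) * dInner M h (w n) (w n)
          ≤ (aK α t n n / 2) * dInner M h (w n) (w n) := by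
            apply mul_le_mul_of_nonneg_right (by linarith) h4
        _ = 1/2 * (aK α t n n * dInner M h (w n) (w n)) := by ring
    linarith
  linarith

lemma pt2 (g ε x : ℝ) :
    0 ≤ x^4 - (4*g/3)*x^3 - 2*(1+ε)*x^2 + (9/7)*(1+ε+g^2)^2 := by
  nlinarith [sq_nonneg (x^2 - 3*g*x), sq_nonneg (7*x^2 - 9*(1+ε+g^2))]

lemma lb (L : ℝ) (hL : 0 < L) (M : ℕ) [NeZero M] (g ε : ℝ)
    (v : ZMod M → ZMod M → ℝ) :
    2 * dInner M (L/M) v v + 2 * dInner M (L/M) (opA M (L/M) v) (opA M (L/M) v)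
      ≤ 4 * dEnergy M (L/M) g ε v + (9/7)*(1+ε+g^2)^2*L^2 := by
  set h : ℝ := L / M with hh
  have hM0 : (M:ℝ) ≠ 0 := Nat.cast_ne_zero.mpr (NeZero.ne M)
  have habs : ∀ x : ℝ, |x| ^ 4 = x ^ 4 := by
    intro x; rw [← abs_pow]; exact abs_of_nonneg (by positivity)
  have hconst : (9/7)*(1+ε+g^2)^2*L^2
      = h^2 * ∑ _i : ZMod M, ∑ _j : ZMod M, (9/7)*(1+ε+g^2)^2 := by
    rw [Finset.sum_const, Finset.sum_const, Finset.card_univ]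
    have hcard : Fintype.card (ZMod M) = M := ZMod.card M
    rw [hcard, smul_smul, nsmul_eq_mul]
    push_cast
    rw [hh]
    field_simp
  have hsum : 0 ≤ ∑ i : ZMod M, ∑ j : ZMod M,
      ((v i j)^4 - (4*g/3)*(v i j)^3 - 2*(1+ε)*((v i j)*(v i j)) + (9/7)*(1+ε+g^2)^2) := by
    apply Finset.sum_nonneg; intro i _
    apply Finset.sum_nonneg; intro j _
    have := pt2 g ε (v i j)
    nlinarith [this]
  have hkey : 4 * dEnergy M h g ε v + (9/7)*(1+ε+g^2)^2*L^2
      - 2 * dInner M h v v - 2 * dInner M h (opA M h v) (opA M h v)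
      = h^2 * ∑ i : ZMod M, ∑ j : ZMod M,
        ((v i j)^4 - (4*g/3)*(v i j)^3 - 2*(1+ε)*((v i j)*(v i j)) + (9/7)*(1+ε+g^2)^2) := by
    rw [hconst]
    have hexpand : ∑ i : ZMod M, ∑ j : ZMod M,
        ((v i j)^4 - (4*g/3)*(v i j)^3 - 2*(1+ε)*((v i j)*(v i j)) + (9/7)*(1+ε+g^2)^2)
        = (∑ i : ZMod M, ∑ j : ZMod M, (v i j)^4)
          - (4*g/3) * (∑ i : ZMod M, ∑ j : ZMod M, (v i j)^2 * (v i j))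
          - 2*(1+ε) * (∑ i : ZMod M, ∑ j : ZMod M, (v i j) * (v i j))
          + (∑ _i : ZMod M, ∑ _j : ZMod M, (9:ℝ)/7*(1+ε+g^2)^2) := by
      simp only [Finset.mul_sum]
      simp only [← Finset.sum_sub_distrib, ← Finset.sum_add_distrib]
      refine Finset.sum_congr rfl (fun i _ => ?_)
      refine Finset.sum_congr rfl (fun j _ => ?_)
      ring
    rw [hexpand]
    unfold dEnergy dInner
    simp only [habs]
    ring
  have h2 : (0:ℝ) ≤ h^2 * ∑ i : ZMod M, ∑ j : ZMod M,
      ((v i j)^4 - (4*g/3)*(v i j)^3 - 2*(1+ε)*((v i j)*(v i j)) + (9/7)*(1+ε+g^2)^2) :=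
    mul_nonneg (by positivity) hsum
  linarith [hkey, h2]

end SHaux

/-- Lemma 3.3, L∞ boundedness: under the step restriction
`τ^α ≤ 3/(Γ(2-α)(4g²+3ε))`, any solution of the variable-step L1 scheme satisfies
`‖uⁿ‖_∞ ≤ C̃_Ω √(4E[u⁰] + (9/7)(1+ε+g²)² L²)` for all `n ≥ 1`, where `C̃_Ω` is the
constant of the discrete embedding inequality. -/
theorem numerical_solution_Linfty_bounded
    (L : ℝ) (hL : 0 < L) (M : ℕ) [NeZero M] (hM : 2 ≤ M)
    (g ε : ℝ) (hg : 0 ≤ g) (hε : 0 < ε)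
    (C : ℝ) (hC : 0 < C)
    (hembed : ∀ v : ZMod M → ZMod M → ℝ, ∀ i j : ZMod M,
      |v i j| ≤ C * (dNorm M (L / M) v + dNorm M (L / M) (opA M (L / M) v)))
    (N : ℕ) (α T : ℝ) (hα : 0 < α ∧ α < 1)
    (t : ℕ → ℝ) (ht0 : t 0 = 0) (htN : t N = T)
    (htmono : ∀ k, k < N → t k < t (k + 1))
    (hτ : ∀ k, 1 ≤ k → k ≤ N →
      (t k - t (k - 1)) ^ α ≤ 3 / (Real.Gamma (2 - α) * (4 * g ^ 2 + 3 * ε)))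
    (u : ℕ → ZMod M → ZMod M → ℝ)
    (hscheme : ∀ n, 1 ≤ n → n ≤ N →
      (∑ k ∈ Finset.Icc 1 n, aK α t n k • (u k - u (k - 1)))
        = -(muSH M (L / M) g ε (u n))) :
    ∀ n, 1 ≤ n → n ≤ N → ∀ i j : ZMod M,
      |u n i j| ≤
        C * Real.sqrt (4 * dEnergy M (L / M) g ε (u 0)
          + (9 / 7) * (1 + ε + g ^ 2) ^ 2 * L ^ 2) := by
  intro n hn1 hnN i j
  have hd := decay L hL M g ε hg hε N α hα t htmono hτ u hscheme n hn1 hnN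
  have hlb := lb L hL M g ε (u n)
  set h : ℝ := L / M with hh
  set v : ZMod M → ZMod M → ℝ := u n with hv
  set B : ℝ := 4 * dEnergy M h g ε (u 0) + (9/7)*(1+ε+g^2)^2*L^2 with hB
  have hA1 : 0 ≤ dInner M h v v := dInner_self_nonneg M h v
  have hA2 : 0 ≤ dInner M h (opA M h v) (opA M h v) := dInner_self_nonneg M h _
  have hchain : 2 * dInner M h v v + 2 * dInner M h (opA M h v) (opA M h v) ≤ B := by
    calc 2 * dInner M h v v + 2 * dInner M h (opA M h v) (opA M h v)
        ≤ 4 * dEnergy M h g ε v + (9/7)*(1+ε+g^2)^2*L^2 := hlb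
      _ ≤ B := by rw [hB]; linarith
  have hBnn : 0 ≤ B := le_trans (by linarith) hchain
  have hsq : (dNorm M h v + dNorm M h (opA M h v))^2 ≤ B := by
    have e1 : dNorm M h v ^ 2 = dInner M h v v := Real.sq_sqrt hA1
    have e2 : dNorm M h (opA M h v) ^ 2 = dInner M h (opA M h v) (opA M h v) :=
      Real.sq_sqrt hA2
    nlinarith [sq_nonneg (dNorm M h v - dNorm M h (opA M h v)), e1, e2, hchain]
  have hnorm : dNorm M h v + dNorm M h (opA M h v) ≤ Real.sqrt B := by
    have hnn : 0 ≤ dNorm M h v + dNorm M h (opA M h v) :=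
      add_nonneg (Real.sqrt_nonneg _) (Real.sqrt_nonneg _)
    calc dNorm M h v + dNorm M h (opA M h v)
        = Real.sqrt ((dNorm M h v + dNorm M h (opA M h v))^2) := (Real.sqrt_sq hnn).symm
      _ ≤ Real.sqrt B := Real.sqrt_le_sqrt hsq
  calc |u n i j| ≤ C * (dNorm M h v + dNorm M h (opA M h v)) := hembed (u n) i j
    _ ≤ C * Real.sqrt B := mul_le_mul_of_nonneg_left hnorm hC.le
    _ = C * Real.sqrt (4 * dEnergy M (L / M) g ε (u 0)
          + (9 / 7) * (1 + ε + g ^ 2) ^ 2 * L ^ 2) := by rw [hB]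
end

section
/- Let H be a real inner product space and let coefficients a_0 > a_1 > ⋯ > a_{n−1} > 0 be given (e.g., the variable-step L1 kernels a_j = a^{(n)}_j). Then for any vectors e⁰, e¹, …, e^n ∈ H, ⟨ Σ_{k=1}^{n} a_{n−k} (e^k − e^{k−1}), e^n ⟩ ≥ ‖e^n‖ · Σ_{k=1}^{n} a_{n−k} ( ‖e^k‖ − ‖e^{k−1}‖ ). -/
open scoped BigOperators RealInnerProductSpace

/-- Abel summation helper. -/
lemma abel_sum_aux (c d : ℕ → ℝ) (n : ℕ) :
    ∑ k ∈ Finset.Icc 1 (n + 1), c k * (d k - d (k - 1)) =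
      c (n + 1) * d (n + 1) - c 1 * d 0 +
        ∑ k ∈ Finset.Icc 1 n, (c k - c (k + 1)) * d k := by
  induction n with
  | zero => simp; ring
  | succ m ih =>
      rw [Finset.sum_Icc_succ_top (by omega : 1 ≤ m + 1 + 1), ih,
        Finset.sum_Icc_succ_top (by omega : 1 ≤ m + 1)]
      simp only [Nat.add_sub_cancel]
      ring

/-- for strictly decreasing positive coefficients `a_0 > a_1 > ⋯ > a_{n-1} > 0`
(e.g. the variable-step L1 kernels) and any vectors `e⁰,…,eⁿ` in a real inner product space,
`⟨Σ_{k=1}^n a_{n-k}(e^k - e^{k-1}), e^n⟩ ≥ ‖e^n‖ Σ_{k=1}^n a_{n-k}(‖e^k‖ - ‖e^{k-1}‖)`. -/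
theorem L1_kernel_inner_product_lower_bound
    (H : Type*) [NormedAddCommGroup H] [InnerProductSpace ℝ H]
    (n : ℕ) (hn : 1 ≤ n) (a : ℕ → ℝ)
    (ha_dec : ∀ j, j + 1 ≤ n - 1 → a (j + 1) < a j)
    (ha_pos : 0 < a (n - 1))
    (e : ℕ → H) :
    ⟪∑ k ∈ Finset.Icc 1 n, a (n - k) • (e k - e (k - 1)), e n⟫ ≥
      ‖e n‖ * ∑ k ∈ Finset.Icc 1 n, a (n - k) * (‖e k‖ - ‖e (k - 1)‖) := by
  obtain ⟨m, rfl⟩ : ∃ m, n = m + 1 := ⟨n - 1, by omega⟩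
  set N := m + 1 with hN
  set c : ℕ → ℝ := fun k => a (N - k) with hc
  set d : ℕ → ℝ := fun k => ⟪e k, e N⟫ - ‖e N‖ * ‖e k‖ with hd
  have hd_nonpos : ∀ k, d k ≤ 0 := by
    intro k
    have := real_inner_le_norm (e k) (e N)
    simp only [hd]
    nlinarith [this]
  rw [sum_inner]
  simp only [real_inner_smul_left, inner_sub_left]
  rw [ge_iff_le, ← sub_nonneg, Finset.mul_sum, ← Finset.sum_sub_distrib]
  have key : ∀ k ∈ Finset.Icc 1 N,
      a (N - k) * (⟪e k, e N⟫ - ⟪e (k - 1), e N⟫) -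
        ‖e N‖ * (a (N - k) * (‖e k‖ - ‖e (k - 1)‖)) = c k * (d k - d (k - 1)) := by
    intro k _
    simp only [hc, hd]
    ring
  rw [Finset.sum_congr rfl key, hN, abel_sum_aux]
  have hdN : d (m + 1) = 0 := by
    simp only [hd, hN, real_inner_self_eq_norm_mul_norm]
    ring
  rw [hdN]
  have h1 : 0 ≤ -(c 1 * d 0) := by
    have hc1 : c 1 = a m := by simp [hc, hN]
    have : 0 < a m := by simpa [hN] using ha_pos
    nlinarith [hd_nonpos 0, this, hc1.symm ▸ this]
  have h2 : 0 ≤ ∑ k ∈ Finset.Icc 1 m, (c k - c (k + 1)) * d k := by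
    apply Finset.sum_nonneg
    intro k hk
    simp only [Finset.mem_Icc] at hk
    have hck : c k - c (k + 1) ≤ 0 := by
      have h := ha_dec (m - k) (by omega)
      have e1 : m - k + 1 = N - k := by omega
      have e2 : m - k = N - (k + 1) := by omega
      rw [e1, e2] at h
      simp only [hc]
      linarith
    nlinarith [hck, hd_nonpos k]
  nlinarith [h1, h2]
end

section
/- (Energy dissipation of the variable-step backward Euler scheme for the classical Swift–Hohenberg equation.) Let g ≥ 0, ε > 0 and suppose the maximum time step satisfies τ ≤ 3/(4g² + 3ε). If u⁰, …, u^N ∈ V_h satisfy (u^n − u^{n−1})/τ_n = −μ^n with μ^n := (1+Δ_h)² u^n + f(u^n) for 1 ≤ n ≤ N, then (E[u^n] − E[u^{n−1}])/τ_n + ½‖μ^n‖² ≤ 0 for every 1 ≤ n ≤ N. -/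
open scoped BigOperators

lemma shift_sum {M : ℕ} [NeZero M] (F : ZMod M → ℝ) (c : ZMod M) :
    ∑ i : ZMod M, F (i + c) = ∑ i : ZMod M, F i :=
  Fintype.sum_equiv (Equiv.addRight c) _ _ (fun _ => rfl)

lemma dLap_symm (M : ℕ) [NeZero M] (h : ℝ) (v w : ZMod M → ZMod M → ℝ) :
    ∑ i : ZMod M, ∑ j : ZMod M, dLap M h v i j * w i j
      = ∑ i : ZMod M, ∑ j : ZMod M, v i j * dLap M h w i j := by
  have e1 : ∑ i : ZMod M, ∑ j : ZMod M, v (i+1) j * w i j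
      = ∑ i : ZMod M, ∑ j : ZMod M, v i j * w (i-1) j := by
    simpa [add_sub_cancel_right] using
      shift_sum (M := M) (fun i => ∑ j : ZMod M, v i j * w (i - 1) j) 1
  have e2 : ∑ i : ZMod M, ∑ j : ZMod M, v (i-1) j * w i j
      = ∑ i : ZMod M, ∑ j : ZMod M, v i j * w (i+1) j := by
    simpa [sub_eq_add_neg] using
      shift_sum (M := M) (fun i => ∑ j : ZMod M, v i j * w (i + 1) j) (-1)
  have e3 : ∑ i : ZMod M, ∑ j : ZMod M, v i (j+1) * w i j
      = ∑ i : ZMod M, ∑ j : ZMod M, v i j * w i (j-1) := by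
    refine Finset.sum_congr rfl fun i _ => ?_
    simpa [add_sub_cancel_right] using
      shift_sum (M := M) (fun j => v i j * w i (j - 1)) 1
  have e4 : ∑ i : ZMod M, ∑ j : ZMod M, v i (j-1) * w i j
      = ∑ i : ZMod M, ∑ j : ZMod M, v i j * w i (j+1) := by
    refine Finset.sum_congr rfl fun i _ => ?_
    simpa [sub_eq_add_neg] using
      shift_sum (M := M) (fun j => v i j * w i (j + 1)) (-1)
  have expandL : ∀ A B C D E W : ℝ,
      (A + B + C + D - 4 * E) / h ^ 2 * W
        = (A * W + B * W + C * W + D * W - 4 * (E * W)) / h ^ 2 := by intros; ring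
  have expandR : ∀ A B C D E W : ℝ,
      W * ((A + B + C + D - 4 * E) / h ^ 2)
        = (W * A + W * B + W * C + W * D - 4 * (W * E)) / h ^ 2 := by intros; ring
  simp only [dLap, expandL, expandR, ← Finset.sum_div, Finset.sum_add_distrib,
    Finset.sum_sub_distrib, ← Finset.mul_sum]
  rw [e1, e2, e3, e4]
  ring

lemma opA_symm (M : ℕ) [NeZero M] (h : ℝ) (v w : ZMod M → ZMod M → ℝ) :
    ∑ i : ZMod M, ∑ j : ZMod M, opA M h v i j * w i j
      = ∑ i : ZMod M, ∑ j : ZMod M, v i j * opA M h w i j := by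
  simp only [opA, Pi.add_apply, add_mul, mul_add, Finset.sum_add_distrib,
    dLap_symm M h v w]

lemma scalar_bound (g ε a τ' d : ℝ) :
    ((1:ℝ)/4 * a^4 - g/3 * (a^2*a) - ε/2 * (a*a))
      - ((1:ℝ)/4 * (a + τ'*d)^4 - g/3 * ((a+τ'*d)^2*(a+τ'*d)) - ε/2 * ((a+τ'*d)*(a+τ'*d)))
      ≤ (g^2/6 + ε/2) * τ'^2 * (d*d) - τ' * ((a^3 - g*a^2 - ε*a) * d) := by
  nlinarith [sq_nonneg ((τ'*d)*(3*a-g)), sq_nonneg ((τ'*d)*(3*a+3*(a+τ'*d)-2*g)), sq_nonneg (τ'*d)]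


lemma assemble (P τ C SPP SA2 SMM Q Sf Fa Fb Ea Eb : ℝ)
    (hP : 0 ≤ P) (hτ : 0 < τ) (hCτ : C * τ ≤ 1/2)
    (hEa : Ea = 1/2 * (P * SPP) + P * Fa)
    (hEb : Eb = 1/2 * (P * (SPP + 2*τ*SA2 + τ^2*SMM)) + P * Fb)
    (hnl : Fa - Fb ≤ C * τ^2 * Q - τ * Sf)
    (hQsplit : Q = SA2 + Sf)
    (hQ : 0 ≤ Q) (hSMM : 0 ≤ SMM) :
    Ea - Eb + τ * (1/2 * (P * Q)) ≤ 0 := by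
  have hPQ : P * τ * Q = P * τ * SA2 + P * τ * Sf := by rw [hQsplit]; ring
  nlinarith [hPQ, mul_le_mul_of_nonneg_left hnl hP,
    mul_nonneg (mul_nonneg hP (sq_nonneg τ)) hSMM,
    mul_nonneg (by linarith : (0:ℝ) ≤ 1/2 - C*τ) (mul_nonneg (mul_nonneg hP hτ.le) hQ)]

/-- energy dissipation of the variable-step backward Euler scheme for the
classical Swift–Hohenberg equation: if `τ ≤ 3/(4g²+3ε)` and `(uⁿ - u^{n-1})/τ_n = -μⁿ`,
then `(E[uⁿ] - E[u^{n-1}])/τ_n + ½‖μⁿ‖² ≤ 0`. -/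
theorem backward_Euler_energy_dissipation
    (L : ℝ) (hL : 0 < L) (M : ℕ) [NeZero M] (hM : 2 ≤ M)
    (g ε : ℝ) (hg : 0 ≤ g) (hε : 0 < ε)
    (N : ℕ) (T : ℝ)
    (t : ℕ → ℝ) (ht0 : t 0 = 0) (htN : t N = T)
    (htmono : ∀ k, k < N → t k < t (k + 1))
    (hτ : ∀ k, 1 ≤ k → k ≤ N → t k - t (k - 1) ≤ 3 / (4 * g ^ 2 + 3 * ε))
    (u : ℕ → ZMod M → ZMod M → ℝ)
    (hscheme : ∀ n, 1 ≤ n → n ≤ N →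
      (1 / (t n - t (n - 1))) • (u n - u (n - 1)) = -(muSH M (L / M) g ε (u n))) :
    ∀ n, 1 ≤ n → n ≤ N →
      (dEnergy M (L / M) g ε (u n) - dEnergy M (L / M) g ε (u (n - 1))) / (t n - t (n - 1))
          + (1 / 2) * dInner M (L / M) (muSH M (L / M) g ε (u n)) (muSH M (L / M) g ε (u n))
        ≤ 0 := by
  intro n hn1 hnN
  obtain ⟨hh, hhdef⟩ : ∃ x : ℝ, x = L / M := ⟨_, rfl⟩
  obtain ⟨τ, hτdef⟩ : ∃ x : ℝ, x = t n - t (n - 1) := ⟨_, rfl⟩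
  rw [← hhdef, ← hτdef]
  obtain ⟨m, hm⟩ : ∃ f, f = muSH M hh g ε (u n) := ⟨_, rfl⟩
  rw [← hm]
  have hτpos : 0 < τ := by
    have h1 : t (n-1) < t (n-1+1) := htmono (n-1) (by omega)
    have h2 : (n-1)+1 = n := by omega
    rw [h2] at h1
    rw [hτdef]; linarith
  have hs := hscheme n hn1 hnN
  rw [← hhdef, ← hτdef, ← hm] at hs
  -- pointwise relation u^{n-1} = u^n + τ m
  have hb : ∀ i j, u (n-1) i j = u n i j + τ * m i j := by
    intro i j
    have h0 := congrFun (congrFun hs i) j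
    simp only [Pi.smul_apply, Pi.sub_apply, Pi.neg_apply, smul_eq_mul] at h0
    field_simp [hτpos.ne'] at h0
    linarith
  -- m = A²u + f(u) pointwise
  have hmdef : ∀ i j, m i j = opA M hh (opA M hh (u n)) i j
      + ((u n i j)^3 - g*(u n i j)^2 - ε*(u n i j)) := by
    intro i j
    simp only [hm, muSH, fPt, Pi.add_apply]
  -- linearity of opA through the scheme
  have hopAb : ∀ i j, opA M hh (u (n-1)) i j
      = opA M hh (u n) i j + τ * opA M hh m i j := by
    intro i j
    simp only [opA, dLap, Pi.add_apply, hb]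
    ring
  -- quadratic expansion
  have hquad : ∑ i : ZMod M, ∑ j : ZMod M,
        opA M hh (u (n-1)) i j * opA M hh (u (n-1)) i j
      = (∑ i : ZMod M, ∑ j : ZMod M, opA M hh (u n) i j * opA M hh (u n) i j)
        + 2*τ*(∑ i : ZMod M, ∑ j : ZMod M, opA M hh (u n) i j * opA M hh m i j)
        + τ^2*(∑ i : ZMod M, ∑ j : ZMod M, opA M hh m i j * opA M hh m i j) := by
    have step : ∀ i j, opA M hh (u (n-1)) i j * opA M hh (u (n-1)) i j
        = opA M hh (u n) i j * opA M hh (u n) i j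
          + 2*τ*(opA M hh (u n) i j * opA M hh m i j)
          + τ^2*(opA M hh m i j * opA M hh m i j) := by
      intro i j; rw [hopAb i j]; ring
    simp only [step, Finset.sum_add_distrib, ← Finset.mul_sum]
  -- energy in sum form
  have hE : ∀ v : ZMod M → ZMod M → ℝ, dEnergy M hh g ε v
      = (1/2) * (hh^2 * ∑ i : ZMod M, ∑ j : ZMod M, opA M hh v i j * opA M hh v i j)
        + hh^2 * ∑ i : ZMod M, ∑ j : ZMod M,
            ((1:ℝ)/4 * (v i j)^4 - g/3 * ((v i j)^2 * v i j) - ε/2 * (v i j * v i j)) := by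
    intro v
    have habs : ∀ i j : ZMod M, |v i j| ^ 4 = (v i j) ^ 4 := fun i j =>
      Even.pow_abs ⟨2, rfl⟩ _
    simp only [dEnergy, dInner, habs, Finset.sum_sub_distrib, ← Finset.mul_sum]
    ring
  -- adjoint identity
  have hadj : ∑ i : ZMod M, ∑ j : ZMod M, opA M hh (u n) i j * opA M hh m i j
      = ∑ i : ZMod M, ∑ j : ZMod M, opA M hh (opA M hh (u n)) i j * m i j :=
    (opA_symm M hh (opA M hh (u n)) m).symm
  -- Q = ⟨A²u, m⟩ + ⟨f(u), m⟩
  have hQsplit : ∑ i : ZMod M, ∑ j : ZMod M, m i j * m i j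
      = (∑ i : ZMod M, ∑ j : ZMod M, opA M hh (opA M hh (u n)) i j * m i j)
        + ∑ i : ZMod M, ∑ j : ZMod M, ((u n i j)^3 - g*(u n i j)^2 - ε*(u n i j)) * m i j := by
    have e : ∀ i j, m i j * m i j
        = opA M hh (opA M hh (u n)) i j * m i j
          + ((u n i j)^3 - g*(u n i j)^2 - ε*(u n i j)) * m i j := by
      intro i j
      nth_rewrite 1 [hmdef i j]
      ring
    simp only [e, Finset.sum_add_distrib]
  -- nonlinear bound
  have hnl : (∑ i : ZMod M, ∑ j : ZMod M,
        ((1:ℝ)/4 * (u n i j)^4 - g/3 * ((u n i j)^2 * u n i j) - ε/2 * (u n i j * u n i j)))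
      - (∑ i : ZMod M, ∑ j : ZMod M,
        ((1:ℝ)/4 * (u (n-1) i j)^4 - g/3 * ((u (n-1) i j)^2 * u (n-1) i j)
          - ε/2 * (u (n-1) i j * u (n-1) i j)))
      ≤ (g^2/6 + ε/2) * τ^2 * (∑ i : ZMod M, ∑ j : ZMod M, m i j * m i j)
        - τ * (∑ i : ZMod M, ∑ j : ZMod M,
            ((u n i j)^3 - g*(u n i j)^2 - ε*(u n i j)) * m i j) := by
    have h1 : (∑ i : ZMod M, ∑ j : ZMod M,
          ((1:ℝ)/4 * (u n i j)^4 - g/3 * ((u n i j)^2 * u n i j) - ε/2 * (u n i j * u n i j)))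
        - (∑ i : ZMod M, ∑ j : ZMod M,
          ((1:ℝ)/4 * (u (n-1) i j)^4 - g/3 * ((u (n-1) i j)^2 * u (n-1) i j)
            - ε/2 * (u (n-1) i j * u (n-1) i j)))
        ≤ ∑ i : ZMod M, ∑ j : ZMod M,
            ((g^2/6 + ε/2) * τ^2 * (m i j * m i j)
              - τ * (((u n i j)^3 - g*(u n i j)^2 - ε*(u n i j)) * m i j)) := by
      rw [← Finset.sum_sub_distrib]
      refine Finset.sum_le_sum fun i _ => ?_
      rw [← Finset.sum_sub_distrib]
      refine Finset.sum_le_sum fun j _ => ?_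
      rw [hb i j]
      exact scalar_bound g ε (u n i j) τ (m i j)
    calc _ ≤ _ := h1
    _ = _ := by simp only [Finset.sum_sub_distrib, ← Finset.mul_sum]
  -- positivity facts
  have hh2 : (0:ℝ) ≤ hh^2 := sq_nonneg _
  have hQ : (0:ℝ) ≤ ∑ i : ZMod M, ∑ j : ZMod M, m i j * m i j :=
    Finset.sum_nonneg fun i _ => Finset.sum_nonneg fun j _ => mul_self_nonneg _
  have hSMM : (0:ℝ) ≤ ∑ i : ZMod M, ∑ j : ZMod M, opA M hh m i j * opA M hh m i j :=
    Finset.sum_nonneg fun i _ => Finset.sum_nonneg fun j _ => mul_self_nonneg _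
  -- time-step bound
  have hden : (0:ℝ) < 4 * g ^ 2 + 3 * ε := by positivity
  have hτle : τ * (4 * g ^ 2 + 3 * ε) ≤ 3 := by
    have h3 := hτ n hn1 hnN
    rw [← hτdef] at h3
    exact (le_div_iff₀ hden).mp h3
  have hCτ : (g^2/6 + ε/2) * τ ≤ 1/2 := by nlinarith
  -- main inequality
  have hEa := hE (u n)
  have hEb := hE (u (n-1))
  rw [hquad, hadj] at hEb
  have hI : dInner M hh m m = hh^2 * (∑ i : ZMod M, ∑ j : ZMod M, m i j * m i j) := rfl
  have key : dEnergy M hh g ε (u n) - dEnergy M hh g ε (u (n-1))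
      + τ * ((1/2) * dInner M hh m m) ≤ 0 := by
    rw [hI]
    exact assemble (hh^2) τ (g^2/6 + ε/2) _ _ _ _ _ _ _ _ _
      hh2 hτpos hCτ hEa hEb hnl hQsplit hQ hSMM
  have hrw : (dEnergy M hh g ε (u n) - dEnergy M hh g ε (u (n-1))) / τ
      + (1/2) * dInner M hh m m
      = (dEnergy M hh g ε (u n) - dEnergy M hh g ε (u (n-1))
          + τ * ((1/2) * dInner M hh m m)) / τ := by
    field_simp
  rw [hrw]
  exact div_nonpos_of_nonpos_of_nonneg key hτpos.le
end

section
/- (Asymptotic compatibility of the kernels as α → 1⁻.) Fix a mesh 0 = t_0 < t_1 < ⋯ < t_N = T and fix 1 ≤ n ≤ N. Regarding the L1 kernels a^{(n)}_{n−k}(α) and the DCC kernels p^{(n)}_{n−j}(α) as functions of the fractional order α ∈ (0,1), one has lim_{α→1⁻} a^{(n)}_{0}(α) = 1/τ_n, lim_{α→1⁻} a^{(n)}_{n−k}(α) = 0 for every 1 ≤ k ≤ n−1, and consequently lim_{α→1⁻} p^{(n)}_{n−j}(α) = τ_j for every 1 ≤ j ≤ n. -/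
open scoped BigOperators

open Filter Topology

lemma aK_formula {α : ℝ} (hα : α ∈ Set.Ioo (0:ℝ) 1) (t : ℕ → ℝ) (n k : ℕ)
    (hk : t (k-1) < t k) :
    aK α t n k =
      ((t n - t (k-1)) ^ (1-α) - (t n - t k) ^ (1-α)) /
        (Real.Gamma (2-α) * (t k - t (k-1))) := by
  obtain ⟨hα0, hα1⟩ := hα
  have h1α : (0:ℝ) < 1 - α := by linarith
  have hΓpos : 0 < Real.Gamma (1 - α) := Real.Gamma_pos_of_pos h1α
  have hint : (fun s => omegaK (1-α) (t n - s)) = fun s => (t n - s) ^ (-α) / Real.Gamma (1-α) := by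
    funext s
    have : (1 - α) - 1 = -α := by ring
    rw [omegaK, this]
  rw [aK, hint, intervalIntegral.integral_div,
    intervalIntegral.integral_comp_sub_left (fun x => x ^ (-α)) (t n),
    integral_rpow (Or.inl (by linarith : (-1:ℝ) < -α))]
  have hΓ2 : Real.Gamma (2 - α) = (1 - α) * Real.Gamma (1 - α) := by
    have : (2:ℝ) - α = (1 - α) + 1 := by ring
    rw [this, Real.Gamma_add_one (by linarith)]
  have h1 : -α + 1 = 1 - α := by ring
  rw [h1, hΓ2]
  have hτ : t k - t (k-1) ≠ 0 := by linarith
  field_simp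

/-- `Γ(2-α) → Γ(1) = 1`. -/
lemma tendsto_Gamma_two_sub :
    Tendsto (fun α : ℝ => Real.Gamma (2 - α)) (𝓝[Set.Ioo (0:ℝ) 1] 1) (𝓝 1) := by
  have hΓ : ContinuousAt Real.Gamma 1 := by
    refine (Real.differentiableAt_Gamma fun m => ?_).continuousAt
    intro h
    have hm : (0:ℝ) ≤ (m:ℝ) := Nat.cast_nonneg m
    have h1 : (1:ℝ) = -(m:ℝ) := h
    linarith
  have h1 : Tendsto (fun α : ℝ => 2 - α) (𝓝[Set.Ioo (0:ℝ) 1] 1) (𝓝 1) := by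
    have : Tendsto (fun α : ℝ => 2 - α) (𝓝 (1:ℝ)) (𝓝 ((2:ℝ) - 1)) :=
      tendsto_const_nhds.sub tendsto_id
    norm_num at this
    exact this.mono_left nhdsWithin_le_nhds
  have := hΓ.tendsto.comp h1
  simpa [Real.Gamma_one, Function.comp_def] using this

/-- `x^(1-α) → 1` for `x > 0`. -/
lemma tendsto_rpow_one_sub {x : ℝ} (hx : 0 < x) :
    Tendsto (fun α : ℝ => x ^ (1 - α)) (𝓝[Set.Ioo (0:ℝ) 1] 1) (𝓝 1) := by
  have he : Tendsto (fun α : ℝ => 1 - α) (𝓝[Set.Ioo (0:ℝ) 1] 1) (𝓝 0) := by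
    have : Tendsto (fun α : ℝ => 1 - α) (𝓝 (1:ℝ)) (𝓝 (1 - 1)) :=
      tendsto_const_nhds.sub tendsto_id
    simpa using this.mono_left nhdsWithin_le_nhds
  have := (tendsto_const_nhds (x := x)).rpow he (Or.inl hx.ne')
  simpa using this

/-- `a^{(n)}_0(α) → 1/τ_n`. -/
lemma tendsto_aK_self (t : ℕ → ℝ) (n : ℕ) (h : t (n-1) < t n) :
    Tendsto (fun α : ℝ => aK α t n n) (𝓝[Set.Ioo (0 : ℝ) 1] 1)
      (𝓝 (1 / (t n - t (n - 1)))) := by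
  have hτ : 0 < t n - t (n-1) := by linarith
  have hEq : (fun α : ℝ => aK α t n n) =ᶠ[𝓝[Set.Ioo (0 : ℝ) 1] 1]
      fun α => (t n - t (n-1)) ^ (1-α) / (Real.Gamma (2-α) * (t n - t (n-1))) := by
    filter_upwards [self_mem_nhdsWithin] with α hα
    rw [aK_formula hα t n n h, sub_self, Real.zero_rpow (by simp only [Set.mem_Ioo] at hα; linarith),
      sub_zero]
  rw [tendsto_congr' hEq]
  have hnum := tendsto_rpow_one_sub hτ
  have hden : Tendsto (fun α : ℝ => Real.Gamma (2-α) * (t n - t (n-1)))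
      (𝓝[Set.Ioo (0 : ℝ) 1] 1) (𝓝 (1 * (t n - t (n-1)))) :=
    tendsto_Gamma_two_sub.mul tendsto_const_nhds
  have := hnum.div hden (by simpa using hτ.ne')
  simpa [Pi.div_def] using this

/-- `a^{(n)}_{n-k}(α) → 0` for `k < n`. -/
lemma tendsto_aK_off (t : ℕ → ℝ) (n k : ℕ) (hk : t (k-1) < t k) (hkn : t k < t n) :
    Tendsto (fun α : ℝ => aK α t n k) (𝓝[Set.Ioo (0 : ℝ) 1] 1) (𝓝 0) := by
  have hτ : 0 < t k - t (k-1) := by linarith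
  have h1 : 0 < t n - t (k-1) := by linarith
  have h2 : 0 < t n - t k := by linarith
  have hEq : (fun α : ℝ => aK α t n k) =ᶠ[𝓝[Set.Ioo (0 : ℝ) 1] 1]
      fun α => ((t n - t (k-1)) ^ (1-α) - (t n - t k) ^ (1-α)) /
        (Real.Gamma (2-α) * (t k - t (k-1))) := by
    filter_upwards [self_mem_nhdsWithin] with α hα
    exact aK_formula hα t n k hk
  rw [tendsto_congr' hEq]
  have hnum : Tendsto (fun α : ℝ => (t n - t (k-1)) ^ (1-α) - (t n - t k) ^ (1-α))
      (𝓝[Set.Ioo (0 : ℝ) 1] 1) (𝓝 (1 - 1)) :=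
    (tendsto_rpow_one_sub h1).sub (tendsto_rpow_one_sub h2)
  have hden : Tendsto (fun α : ℝ => Real.Gamma (2-α) * (t k - t (k-1)))
      (𝓝[Set.Ioo (0 : ℝ) 1] 1) (𝓝 (1 * (t k - t (k-1)))) :=
    tendsto_Gamma_two_sub.mul tendsto_const_nhds
  have := hnum.div hden (by simpa using hτ.ne')
  simpa [Pi.div_def] using this

/-- asymptotic compatibility of the kernels as α → 1⁻: on a fixed mesh,
`a^{(n)}_0(α) → 1/τ_n`, `a^{(n)}_{n-k}(α) → 0` for `1 ≤ k ≤ n-1`, and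
`p^{(n)}_{n-j}(α) → τ_j` for `1 ≤ j ≤ n`, as `α → 1⁻` within `(0,1)`. -/
theorem kernels_asymptotic_compatibility
    (N : ℕ) (T : ℝ)
    (t : ℕ → ℝ) (ht0 : t 0 = 0) (htN : t N = T)
    (htmono : ∀ k, k < N → t k < t (k + 1))
    (n : ℕ) (hn1 : 1 ≤ n) (hnN : n ≤ N) :
    Tendsto (fun α : ℝ => aK α t n n) (𝓝[Set.Ioo (0 : ℝ) 1] 1)
        (𝓝 (1 / (t n - t (n - 1)))) ∧
      (∀ k, 1 ≤ k → k ≤ n - 1 →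
        Tendsto (fun α : ℝ => aK α t n k) (𝓝[Set.Ioo (0 : ℝ) 1] 1) (𝓝 0)) ∧
      (∀ j, 1 ≤ j → j ≤ n →
        Tendsto (fun α : ℝ => pK α t n (n - j)) (𝓝[Set.Ioo (0 : ℝ) 1] 1)
          (𝓝 (t j - t (j - 1)))) := by
  -- mesh is strictly increasing up to N
  have hlt : ∀ i j : ℕ, i < j → j ≤ N → t i < t j := by
    intro i j hij hjN
    induction j with
    | zero => omega
    | succ j ih =>
      rcases Nat.lt_succ_iff_lt_or_eq.mp hij with h | h
      · exact lt_trans (ih h (by omega)) (htmono j (by omega))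
      · rw [h]; exact htmono j (by omega)
  have hτ : ∀ k, 1 ≤ k → k ≤ N → t (k - 1) < t k := fun k h1 h2 =>
    hlt (k-1) k (by omega) h2
  -- the two aK limits, in general form
  have haself : ∀ m, 1 ≤ m → m ≤ N →
      Tendsto (fun α : ℝ => aK α t m m) (𝓝[Set.Ioo (0 : ℝ) 1] 1)
        (𝓝 (1 / (t m - t (m - 1)))) := fun m h1 h2 =>
    tendsto_aK_self t m (hτ m h1 h2)
  have haoff : ∀ n' k, 1 ≤ k → k < n' → n' ≤ N →
      Tendsto (fun α : ℝ => aK α t n' k) (𝓝[Set.Ioo (0 : ℝ) 1] 1) (𝓝 0) := by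
    intro n' k hk1 hkn' hn'N
    exact tendsto_aK_off t n' k (hτ k hk1 (by omega)) (hlt k n' hkn' hn'N)
  refine ⟨haself n hn1 hnN, fun k hk1 hk2 => haoff n k hk1 (by omega) hnN, ?_⟩
  -- key induction on m for pK
  have key : ∀ m, m ≤ n - 1 →
      Tendsto (fun α : ℝ => pK α t n m) (𝓝[Set.Ioo (0 : ℝ) 1] 1)
        (𝓝 (t (n - m) - t (n - m - 1))) := by
    intro m
    induction m using Nat.strong_induction_on with
    | _ m ih =>
      intro hm
      match m with
      | 0 =>
        have ha := haself n hn1 hnN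
        have hτn : 0 < t n - t (n - 1) := by linarith [hτ n hn1 hnN]
        have h : Tendsto (fun α : ℝ => 1 / aK α t n n) (𝓝[Set.Ioo (0 : ℝ) 1] 1)
            (𝓝 ((1:ℝ) / (1 / (t n - t (n - 1))))) :=
          (tendsto_const_nhds (x := (1:ℝ))).div ha (by positivity)
        rw [one_div_one_div] at h
        simp only [pK]
        exact h
      | m + 1 =>
        have hm2 : m + 2 ≤ n := by omega
        -- limits of the prefactor
        have hj1 : 1 ≤ n - m - 1 := by omega
        have hjN : n - m - 1 ≤ N := by omega
        have hjself := haself (n - m - 1) hj1 hjN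
        have hτj : 0 < t (n - m - 1) - t (n - m - 1 - 1) := by
          linarith [hτ (n - m - 1) hj1 hjN]
        have hpre : Tendsto (fun α : ℝ => 1 / aK α t (n - m - 1) (n - m - 1))
            (𝓝[Set.Ioo (0 : ℝ) 1] 1) (𝓝 (t (n - m - 1) - t (n - m - 1 - 1))) := by
          have h : Tendsto (fun α : ℝ => 1 / aK α t (n - m - 1) (n - m - 1))
              (𝓝[Set.Ioo (0 : ℝ) 1] 1)
              (𝓝 ((1:ℝ) / (1 / (t (n - m - 1) - t (n - m - 1 - 1))))) :=
            (tendsto_const_nhds (x := (1:ℝ))).div hjself (by positivity)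
          rw [one_div_one_div] at h
          exact h
        -- limit of the sum: each term
        have hτnm : 0 < t (n - m) - t (n - m - 1) := by
          linarith [hτ (n - m) (by omega) (by omega)]
        have hsum : Tendsto (fun α : ℝ =>
            ∑ i ∈ (Finset.range (m + 1)).attach,
              (aK α t (n - i.1) (n - m) - aK α t (n - i.1) (n - m - 1)) * pK α t n i.1)
            (𝓝[Set.Ioo (0 : ℝ) 1] 1)
            (𝓝 (∑ i ∈ (Finset.range (m + 1)).attach,
              (if i.1 = m then (1:ℝ) else 0))) := by
          refine tendsto_finset_sum _ fun i _ => ?_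
          have him : i.1 < m + 1 := Finset.mem_range.mp i.2
          by_cases hcase : i.1 = m
          · -- i = m : limit is (1/τ_{n-m} - 0) * τ_{n-m} = 1
            rw [hcase]
            simp only [if_pos rfl]
            have h1 : Tendsto (fun α : ℝ => aK α t (n - m) (n - m))
                (𝓝[Set.Ioo (0 : ℝ) 1] 1) (𝓝 (1 / (t (n - m) - t (n - m - 1)))) := by
              have := haself (n - m) (by omega) (by omega)
              simpa using this
            have h2 : Tendsto (fun α : ℝ => aK α t (n - m) (n - m - 1))
                (𝓝[Set.Ioo (0 : ℝ) 1] 1) (𝓝 0) :=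
              haoff (n - m) (n - m - 1) (by omega) (by omega) (by omega)
            have h3 : Tendsto (fun α : ℝ => pK α t n m)
                (𝓝[Set.Ioo (0 : ℝ) 1] 1) (𝓝 (t (n - m) - t (n - m - 1))) :=
              ih m (by omega) (by omega)
            have := ((h1.sub h2).mul h3)
            have heq : (1 / (t (n - m) - t (n - m - 1)) - 0) * (t (n - m) - t (n - m - 1))
                = 1 := by
              field_simp
              ring
            rw [heq] at this
            exact this
          · -- i < m : limit is (0 - 0) * τ = 0
            have hilt : i.1 < m := by omega
            rw [if_neg hcase]
            have h1 : Tendsto (fun α : ℝ => aK α t (n - i.1) (n - m))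
                (𝓝[Set.Ioo (0 : ℝ) 1] 1) (𝓝 0) :=
              haoff (n - i.1) (n - m) (by omega) (by omega) (by omega)
            have h2 : Tendsto (fun α : ℝ => aK α t (n - i.1) (n - m - 1))
                (𝓝[Set.Ioo (0 : ℝ) 1] 1) (𝓝 0) :=
              haoff (n - i.1) (n - m - 1) (by omega) (by omega) (by omega)
            have h3 : Tendsto (fun α : ℝ => pK α t n i.1)
                (𝓝[Set.Ioo (0 : ℝ) 1] 1) (𝓝 (t (n - i.1) - t (n - i.1 - 1))) :=
              ih i.1 (by omega) (by omega)
            have := (h1.sub h2).mul h3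
            simpa using this
        have hsumval : (∑ i ∈ (Finset.range (m + 1)).attach,
            (if i.1 = m then (1:ℝ) else 0)) = 1 := by
          rw [Finset.sum_attach (Finset.range (m + 1)) (fun j => if j = m then (1:ℝ) else 0)]
          simp
        rw [hsumval] at hsum
        have hfinal := hpre.mul hsum
        rw [mul_one] at hfinal
        have : (fun α : ℝ => pK α t n (m + 1)) = fun α : ℝ =>
            (1 / aK α t (n - m - 1) (n - m - 1)) *
              ∑ i ∈ (Finset.range (m + 1)).attach,
                (aK α t (n - i.1) (n - m) - aK α t (n - i.1) (n - m - 1)) * pK α t n i.1 := by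
          funext α; rw [pK]
        rw [this]
        have hidx : n - (m + 1) = n - m - 1 := by omega
        rw [hidx]
        exact hfinal
  intro j hj1 hjn
  have hkey := key (n - j) (by omega)
  have h1 : n - (n - j) = j := by omega
  rw [h1] at hkey
  exact hkey
end
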